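/- arXiv:2001.05114 — 2 statements merged into one kernel-verified Lean document; each statement's English description precedes it below -/
import Mathlib

section
/- For every real N ≥ 2, the sum over primes p ≤ N of (log p)² is at most 1.26 · N · log N. -/
open Finset ArithmeticFunction Real

noncomputable def psiN (M : ℕ) : ℝ := ∑ d ∈ Finset.Ioc 0 M, Λ d

noncomputable def TN (M : ℕ) : ℝ := ∑ n ∈ Finset.Ioc 0 M, Real.log ↑n







lemma psiN_succ (m : ℕ) : psiN (m + 1) = psiN m + Λ (m + 1) := by
  unfold psiN
  rw [← Finset.sum_Ioc_succ_top (Nat.zero_le _)]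

lemma psiN_mono : Monotone psiN := by
  intro a b hab
  exact Finset.sum_le_sum_of_subset_of_nonneg
    (Finset.Ioc_subset_Ioc le_rfl hab) (fun i _ _ => vonMangoldt_nonneg)

lemma psiN_one : psiN 1 = 0 := by
  unfold psiN
  simp [ArithmeticFunction.vonMangoldt_apply_one]

-- log certificates
lemma log_nat_le (n a b : ℕ) (hb : 0 < b)
    (h : n ^ b * 10 ^ (10 * a) ≤ 27182818283 ^ a) : Real.log n ≤ (a : ℝ) / b := by
  rcases Nat.eq_zero_or_pos n with rfl | hn
  · simp only [Nat.cast_zero, Real.log_zero]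
    positivity
  have hn' : (0:ℝ) < n := by exact_mod_cast hn
  rw [Real.log_le_iff_le_exp hn']
  have hpow : (n:ℝ) ^ b ≤ Real.exp ((a:ℝ)/b) ^ b := by
    have h1 : (n:ℝ) ^ b ≤ (27182818283 / 10 ^ 10 : ℝ) ^ a := by
      rw [div_pow, le_div_iff₀ (by positivity)]
      calc (n:ℝ) ^ b * (10 ^ 10) ^ a = ((n ^ b * 10 ^ (10 * a) : ℕ) : ℝ) := by
            push_cast [pow_mul]; ring
        _ ≤ ((27182818283 ^ a : ℕ) : ℝ) := by exact_mod_cast h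
        _ = (27182818283 : ℝ) ^ a := by push_cast; ring
    have h2 : (27182818283 / 10 ^ 10 : ℝ) ^ a ≤ Real.exp 1 ^ a := by
      apply pow_le_pow_left₀ (by positivity)
      rw [show (27182818283 / 10 ^ 10 : ℝ) = 2.7182818283 by norm_num]
      exact Real.exp_one_gt_d9.le
    calc (n:ℝ) ^ b ≤ Real.exp 1 ^ a := h1.trans h2
      _ = Real.exp a := by rw [← Real.exp_nat_mul]; norm_num
      _ = Real.exp ((a:ℝ)/b) ^ b := by
          rw [← Real.exp_nat_mul]
          congr 1
          field_simp
  exact le_of_pow_le_pow_left₀ hb.ne' (Real.exp_pos _).le hpow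

lemma log_nat_ge (n a b : ℕ) (hb : 0 < b) (hn : 0 < n)
    (h : 27182818286 ^ a ≤ n ^ b * 10 ^ (10 * a)) : (a : ℝ) / b ≤ Real.log n := by
  have hn' : (0:ℝ) < n := by exact_mod_cast hn
  rw [Real.le_log_iff_exp_le hn']
  have hpow : Real.exp ((a:ℝ)/b) ^ b ≤ (n:ℝ) ^ b := by
    have h1 : (27182818286 / 10 ^ 10 : ℝ) ^ a ≤ (n:ℝ) ^ b := by
      rw [div_pow, div_le_iff₀ (by positivity)]
      calc ((27182818286:ℝ)) ^ a = ((27182818286 ^ a : ℕ) : ℝ) := by push_cast; ring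
        _ ≤ ((n ^ b * 10 ^ (10 * a) : ℕ) : ℝ) := by exact_mod_cast h
        _ = (n:ℝ) ^ b * (10 ^ 10) ^ a := by push_cast [pow_mul]; ring
    have h2 : Real.exp 1 ^ a ≤ (27182818286 / 10 ^ 10 : ℝ) ^ a := by
      apply pow_le_pow_left₀ (Real.exp_pos _).le
      rw [show (27182818286 / 10 ^ 10 : ℝ) = 2.7182818286 by norm_num]
      exact Real.exp_one_lt_d9.le
    calc Real.exp ((a:ℝ)/b) ^ b = Real.exp a := by
          rw [← Real.exp_nat_mul]; congr 1; field_simp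
      _ = Real.exp 1 ^ a := by rw [← Real.exp_nat_mul]; norm_num
      _ ≤ (n:ℝ) ^ b := h2.trans h1
  exact le_of_pow_le_pow_left₀ hb.ne' (by positivity) hpow

-- step lemmas for the base-case computation
lemma notPrimePow_of_two_dvd {n p q : ℕ} (hp : p.Prime) (hq : q.Prime) (hpq : p ≠ q)
    (hpn : p ∣ n) (hqn : q ∣ n) : ¬ IsPrimePow n := by
  intro h
  rw [isPrimePow_nat_iff] at h
  obtain ⟨r, k, hr, hk, rfl⟩ := h
  have h1 : p = r := (Nat.prime_dvd_prime_iff_eq hp hr).mp (hp.dvd_of_dvd_pow hpn)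
  have h2 : q = r := (Nat.prime_dvd_prime_iff_eq hq hr).mp (hq.dvd_of_dvd_pow hqn)
  exact hpq (h1.trans h2.symm)

lemma step_prime {n W V : ℕ} (h : psiN n ≤ Real.log W) (hW : 0 < W)
    (hp : (n+1).Prime) (hV : W * (n+1) = V) : psiN (n+1) ≤ Real.log V := by
  rw [psiN_succ, ArithmeticFunction.vonMangoldt_apply_prime hp, ← hV]
  push_cast
  rw [Real.log_mul (by exact_mod_cast hW.ne') (by positivity)]
  exact add_le_add h le_rfl

lemma step_pow {n W V p k : ℕ} (h : psiN n ≤ Real.log W) (hW : 0 < W)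
    (hp : p.Prime) (hk : k ≠ 0) (hpk : p ^ k = n + 1) (hV : W * p = V) :
    psiN (n+1) ≤ Real.log V := by
  rw [psiN_succ, ← hpk, ArithmeticFunction.vonMangoldt_apply_pow hk,
    ArithmeticFunction.vonMangoldt_apply_prime hp, ← hV]
  push_cast
  rw [Real.log_mul (by exact_mod_cast hW.ne') (by exact_mod_cast hp.pos.ne')]
  exact add_le_add h le_rfl

lemma step_comp {n W p q : ℕ} (h : psiN n ≤ Real.log W)
    (hp : p.Prime) (hq : q.Prime) (hpq : p ≠ q) (hpn : p ∣ (n+1)) (hqn : q ∣ (n+1)) :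
    psiN (n+1) ≤ Real.log W := by
  rw [psiN_succ, ArithmeticFunction.vonMangoldt_eq_zero_iff.mpr
    (notPrimePow_of_two_dvd hp hq hpq hpn hqn), add_zero]
  exact h



lemma TN_eq (M : ℕ) : TN M = ∑ d ∈ Finset.Ioc 0 M, Λ d * (M / d : ℕ) := by
  unfold TN
  have h1 : ∀ n ∈ Finset.Ioc 0 M, Real.log n = ∑ d ∈ Finset.Ioc 0 M, if d ∣ n then Λ d else 0 := by
    intro n hn
    simp only [Finset.mem_Ioc] at hn
    rw [← Finset.sum_filter, ← ArithmeticFunction.vonMangoldt_sum (n := n)]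
    apply Finset.sum_congr _ (fun _ _ => rfl)
    ext d
    simp only [Nat.mem_divisors, Finset.mem_filter, Finset.mem_Ioc]
    constructor
    · rintro ⟨hd, hn0⟩
      exact ⟨⟨Nat.pos_of_dvd_of_pos hd hn.1, (Nat.le_of_dvd hn.1 hd).trans hn.2⟩, hd⟩
    · rintro ⟨_, hd⟩
      exact ⟨hd, by omega⟩
  rw [Finset.sum_congr rfl h1, Finset.sum_comm]
  apply Finset.sum_congr rfl
  intro d _
  rw [← Finset.sum_filter, Finset.sum_const, ← Nat.Ioc_filter_dvd_card_eq_div]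
  simp [mul_comm]



lemma log_ratio_le {a b : ℝ} (ha : 0 < a) (hab : a ≤ b) :
    a * (Real.log b - Real.log a) ≤ b - a := by
  have hb : 0 < b := ha.trans_le hab
  have h := Real.log_le_sub_one_of_pos (x := b / a) (by positivity)
  rw [Real.log_div hb.ne' ha.ne'] at h
  have := mul_le_mul_of_nonneg_left h ha.le
  calc a * (Real.log b - Real.log a) ≤ a * (b / a - 1) := this
    _ = b - a := by field_simp

lemma log_ratio_ge {a b : ℝ} (ha : 0 < a) (hab : a ≤ b) :
    b - a ≤ b * (Real.log b - Real.log a) := by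
  have hb : 0 < b := ha.trans_le hab
  have h := Real.log_le_sub_one_of_pos (x := a / b) (by positivity)
  rw [Real.log_div ha.ne' hb.ne'] at h
  have := mul_le_mul_of_nonneg_left h hb.le
  calc b - a = -(b * (a / b - 1)) := by field_simp; ring
    _ ≤ -(b * (Real.log a - Real.log b)) := by linarith
    _ = b * (Real.log b - Real.log a) := by ring

lemma TN_ge (M : ℕ) (hM : 1 ≤ M) : (M:ℝ) * Real.log M - M + 1 ≤ TN M := by
  induction M, hM using Nat.le_induction with
  | base => simp [TN]
  | succ M hM ih =>
    have hTN : TN (M+1) = TN M + Real.log ((M+1 : ℕ) : ℝ) :=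
      Finset.sum_Ioc_succ_top (Nat.zero_le _) _
    have hM' : (1:ℝ) ≤ M := by exact_mod_cast hM
    have key : (M:ℝ) * (Real.log (M+1) - Real.log M) ≤ 1 := by
      have := log_ratio_le (a := (M:ℝ)) (b := (M:ℝ)+1) (by linarith) (by linarith)
      linarith
    push_cast at ih hTN ⊢
    nlinarith [key]

lemma TN_le (M : ℕ) (hM : 1 ≤ M) : TN M ≤ (M:ℝ) * Real.log M - M + 1 + Real.log M := by
  induction M, hM using Nat.le_induction with
  | base => simp [TN]
  | succ M hM ih =>
    have hTN : TN (M+1) = TN M + Real.log ((M+1 : ℕ) : ℝ) :=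
      Finset.sum_Ioc_succ_top (Nat.zero_le _) _
    have hM' : (1:ℝ) ≤ M := by exact_mod_cast hM
    have key : 1 ≤ ((M:ℝ)+1) * (Real.log (M+1) - Real.log M) := by
      have := log_ratio_ge (a := (M:ℝ)) (b := (M:ℝ)+1) (by linarith) (by linarith)
      linarith
    push_cast at ih hTN ⊢
    nlinarith [key]

-- real versions
lemma TN_le_real (x : ℝ) (hx : 1 ≤ x) :
    TN ⌊x⌋₊ ≤ x * Real.log x - x + 2 + Real.log x := by
  set M := ⌊x⌋₊ with hMdef
  have hM1 : 1 ≤ M := Nat.one_le_floor_iff x |>.mpr hx  -- check name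
  have hMx : (M:ℝ) ≤ x := Nat.floor_le (by linarith)
  have hM1' : (1:ℝ) ≤ M := by exact_mod_cast hM1
  have hxM : x ≤ M + 1 := (Nat.lt_floor_add_one x).le
  have hlogM : Real.log M ≤ Real.log x := Real.log_le_log (by linarith) hMx
  have hlogM0 : 0 ≤ Real.log M := Real.log_nonneg hM1'
  have hfl : (M:ℝ) * Real.log M - M ≤ x * Real.log x - x + 1 := by
    nlinarith [Real.log_nonneg hx, hlogM]
  have := TN_le M hM1
  linarith

lemma TN_ge_real (x : ℝ) (hx : 1 ≤ x) :
    x * Real.log x - x - Real.log x ≤ TN ⌊x⌋₊ := by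
  set M := ⌊x⌋₊ with hMdef
  have hM1 : 1 ≤ M := Nat.one_le_floor_iff x |>.mpr hx
  have hMx : (M:ℝ) ≤ x := Nat.floor_le (by linarith)
  have hM1' : (1:ℝ) ≤ M := by exact_mod_cast hM1
  have hxM : x ≤ M + 1 := (Nat.lt_floor_add_one x).le
  have hlogM : Real.log M ≤ Real.log x := Real.log_le_log (by linarith) hMx
  have hlogx : 0 ≤ Real.log x := Real.log_nonneg hx
  have hMlog : (M:ℝ) * (Real.log x - Real.log M) ≤ x - M :=
    log_ratio_le (by linarith) hMx
  have hfl : x * Real.log x - x - Real.log x ≤ (M:ℝ) * Real.log M - M + 1 := by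
    nlinarith
  have := TN_ge M hM1
  linarith



lemma TN_div_eq (M k : ℕ) (hk : 0 < k) :
    TN (M / k) = ∑ d ∈ Finset.Ioc 0 M, Λ d * (M / (d * k) : ℕ) := by
  rw [TN_eq]
  have h1 : ∀ d, (M / k) / d = M / (d * k) := by
    intro d
    rw [Nat.div_div_eq_div_mul, mul_comm]
  rw [Finset.sum_congr rfl (fun d _ => by rw [h1 d])]
  apply Finset.sum_subset (Finset.Ioc_subset_Ioc le_rfl (Nat.div_le_self M k))
  intro d hd hd'
  simp only [Finset.mem_Ioc] at hd hd'
  have hdk : M / k < d := by omega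
  have : M < d * k := (Nat.div_lt_iff_lt_mul hk).mp hdk
  rw [Nat.div_eq_of_lt (by nlinarith)]
  simp

lemma psi_sub_le_E (M : ℕ) :
    psiN M - psiN (M / 6) ≤ TN M - TN (M / 2) - TN (M / 3) - TN (M / 5) + TN (M / 30) := by
  have h2 := TN_div_eq M 2 (by norm_num)
  have h3 := TN_div_eq M 3 (by norm_num)
  have h5 := TN_div_eq M 5 (by norm_num)
  have h30 := TN_div_eq M 30 (by norm_num)
  have h1 : TN M = ∑ d ∈ Finset.Ioc 0 M, Λ d * (M / (d * 1) : ℕ) := by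
    rw [TN_eq]; apply Finset.sum_congr rfl; intro d _; rw [mul_one]
  rw [h1, h2, h3, h5, h30, ← Finset.sum_sub_distrib, ← Finset.sum_sub_distrib,
    ← Finset.sum_sub_distrib, ← Finset.sum_add_distrib]
  have hsplit : ∑ d ∈ Finset.Ioc 0 (M/6), Λ d + ∑ d ∈ Finset.Ioc (M/6) M, Λ d
      = ∑ d ∈ Finset.Ioc 0 M, Λ d :=
    Finset.sum_Ioc_consecutive _ (Nat.zero_le _) (Nat.div_le_self M 6)
  have hpsi : psiN M - psiN (M/6) = ∑ d ∈ Finset.Ioc (M/6) M, Λ d := by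
    unfold psiN; linarith
  rw [hpsi]
  have hsplit2 : ∑ d ∈ Finset.Ioc 0 M,
        (Λ d * (M / (d*1) : ℕ) - Λ d * (M / (d*2) : ℕ) - Λ d * (M / (d*3) : ℕ)
          - Λ d * (M / (d*5) : ℕ) + Λ d * (M / (d*30) : ℕ))
      = ∑ d ∈ Finset.Ioc 0 (M/6),
        (Λ d * (M / (d*1) : ℕ) - Λ d * (M / (d*2) : ℕ) - Λ d * (M / (d*3) : ℕ)
          - Λ d * (M / (d*5) : ℕ) + Λ d * (M / (d*30) : ℕ))
      + ∑ d ∈ Finset.Ioc (M/6) M,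
        (Λ d * (M / (d*1) : ℕ) - Λ d * (M / (d*2) : ℕ) - Λ d * (M / (d*3) : ℕ)
          - Λ d * (M / (d*5) : ℕ) + Λ d * (M / (d*30) : ℕ)) :=
    (Finset.sum_Ioc_consecutive _ (Nat.zero_le _) (Nat.div_le_self M 6)).symm
  rw [hsplit2]
  have key : ∀ d : ℕ, 0 < d →
      ∀ m : ℕ, m = M / d →
      (Λ d * (M / (d*1) : ℕ) - Λ d * (M / (d*2) : ℕ) - Λ d * (M / (d*3) : ℕ)
          - Λ d * (M / (d*5) : ℕ) + Λ d * (M / (d*30) : ℕ))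
        = Λ d * ((m : ℝ) - (m/2 : ℕ) - (m/3 : ℕ) - (m/5 : ℕ) + (m/30 : ℕ)) := by
    intro d hd m hm
    have e1 : M / (d*1) = m := by rw [mul_one, hm]
    have e2 : M / (d*2) = m/2 := by rw [hm, Nat.div_div_eq_div_mul]
    have e3 : M / (d*3) = m/3 := by rw [hm, Nat.div_div_eq_div_mul]
    have e5 : M / (d*5) = m/5 := by rw [hm, Nat.div_div_eq_div_mul]
    have e30 : M / (d*30) = m/30 := by rw [hm, Nat.div_div_eq_div_mul]
    rw [e1, e2, e3, e5, e30]; ring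
  have part1 : (0:ℝ) ≤ ∑ d ∈ Finset.Ioc 0 (M/6),
      (Λ d * (M / (d*1) : ℕ) - Λ d * (M / (d*2) : ℕ) - Λ d * (M / (d*3) : ℕ)
        - Λ d * (M / (d*5) : ℕ) + Λ d * (M / (d*30) : ℕ)) := by
    apply Finset.sum_nonneg
    intro d hd
    simp only [Finset.mem_Ioc] at hd
    rw [key d hd.1 (M/d) rfl]
    apply mul_nonneg vonMangoldt_nonneg
    have hnat : (M/d)/2 + (M/d)/3 + (M/d)/5 ≤ (M/d) + (M/d)/30 := by omega
    have := (Nat.cast_le (α := ℝ)).mpr hnat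
    push_cast at this
    linarith
  have part2 : ∑ d ∈ Finset.Ioc (M/6) M, Λ d ≤ ∑ d ∈ Finset.Ioc (M/6) M,
      (Λ d * (M / (d*1) : ℕ) - Λ d * (M / (d*2) : ℕ) - Λ d * (M / (d*3) : ℕ)
        - Λ d * (M / (d*5) : ℕ) + Λ d * (M / (d*30) : ℕ)) := by
    apply Finset.sum_le_sum
    intro d hd
    simp only [Finset.mem_Ioc] at hd
    have hd0 : 0 < d := lt_of_le_of_lt (Nat.zero_le _) hd.1
    rw [key d hd0 (M/d) rfl]
    have hm1 : 1 ≤ M / d := (Nat.one_le_div_iff hd0).mpr hd.2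
    have hm5 : M / d ≤ 5 := by
      by_contra hcon
      push_neg at hcon
      have h6 : 6 * d ≤ M := (Nat.le_div_iff_mul_le hd0).mp hcon
      have : d ≤ M / 6 := (Nat.le_div_iff_mul_le (by norm_num)).mpr (by linarith)
      omega
    have hnat : (M/d)/2 + (M/d)/3 + (M/d)/5 + 1 ≤ (M/d) + (M/d)/30 := by omega
    have hc := (Nat.cast_le (α := ℝ)).mpr hnat
    push_cast at hc
    nlinarith [vonMangoldt_nonneg (n := d)]
  linarith



lemma floor_nat_div (M k : ℕ) : ⌊(M:ℝ) / (k:ℝ)⌋₊ = M / k := by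
  rw [Nat.floor_div_natCast, Nat.floor_natCast]

lemma psi_recursion (M : ℕ) (hM : 30 ≤ M) :
    psiN M ≤ psiN (M / 6) +
      (Real.log 2 / 2 + Real.log 3 / 3 + Real.log 5 / 5 - Real.log 30 / 30) * M
      + 4 + 5 * Real.log M := by
  have hM' : (30:ℝ) ≤ (M:ℝ) := by exact_mod_cast hM
  have hM0 : (0:ℝ) < M := by linarith
  have hMne : (M:ℝ) ≠ 0 := hM0.ne'
  have hTM : TN M ≤ (M:ℝ) * Real.log M - M + 1 + Real.log M := TN_le M (by omega)
  have h2 : TN (M/2) ≥ ((M:ℝ)/2) * Real.log ((M:ℝ)/2) - (M:ℝ)/2 - Real.log ((M:ℝ)/2) := by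
    have := TN_ge_real ((M:ℝ)/(2:ℕ)) (by push_cast; linarith)
    rwa [floor_nat_div M 2] at this
  have h3 : TN (M/3) ≥ ((M:ℝ)/3) * Real.log ((M:ℝ)/3) - (M:ℝ)/3 - Real.log ((M:ℝ)/3) := by
    have := TN_ge_real ((M:ℝ)/(3:ℕ)) (by push_cast; linarith)
    rwa [floor_nat_div M 3] at this
  have h5 : TN (M/5) ≥ ((M:ℝ)/5) * Real.log ((M:ℝ)/5) - (M:ℝ)/5 - Real.log ((M:ℝ)/5) := by
    have := TN_ge_real ((M:ℝ)/(5:ℕ)) (by push_cast; linarith)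
    rwa [floor_nat_div M 5] at this
  have h30 : TN (M/30) ≤ ((M:ℝ)/30) * Real.log ((M:ℝ)/30) - (M:ℝ)/30 + 2 + Real.log ((M:ℝ)/30) := by
    have := TN_le_real ((M:ℝ)/(30:ℕ)) (by push_cast; linarith)
    rwa [floor_nat_div M 30] at this
  have l2 : Real.log ((M:ℝ)/2) = Real.log M - Real.log 2 := Real.log_div hMne (by norm_num)
  have l3 : Real.log ((M:ℝ)/3) = Real.log M - Real.log 3 := Real.log_div hMne (by norm_num)
  have l5 : Real.log ((M:ℝ)/5) = Real.log M - Real.log 5 := Real.log_div hMne (by norm_num)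
  have l30 : Real.log ((M:ℝ)/30) = Real.log M - Real.log 30 := Real.log_div hMne (by norm_num)
  have lg2 : 0 ≤ Real.log 2 := Real.log_nonneg (by norm_num)
  have lg3 : 0 ≤ Real.log 3 := Real.log_nonneg (by norm_num)
  have lg5 : 0 ≤ Real.log 5 := Real.log_nonneg (by norm_num)
  have lg30 : 0 ≤ Real.log 30 := Real.log_nonneg (by norm_num)
  have hE := psi_sub_le_E M
  rw [l2] at h2
  rw [l3] at h3
  rw [l5] at h5
  rw [l30] at h30
  nlinarith [hE, hTM, h2, h3, h5, h30]

set_option maxHeartbeats 8000000 in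
lemma psi_base (M : ℕ) (hM : M ≤ 358) : psiN M ≤ 1.26 * M := by
  have h1 : psiN 1 ≤ Real.log ((1:ℕ):ℝ) := by rw [psiN_one]; simp
  have h2 : psiN 2 ≤ Real.log ((2:ℕ):ℝ) := step_prime (n := 1) (V := 2) h1 (by norm_num) (by norm_num) (by norm_num)
  have h3 : psiN 3 ≤ Real.log ((6:ℕ):ℝ) := step_prime (n := 2) (V := 6) h2 (by norm_num) (by norm_num) (by norm_num)
  have h4 : psiN 4 ≤ Real.log ((12:ℕ):ℝ) := step_pow (n := 3) (p := 2) (k := 2) (V := 12) h3 (by norm_num) (by norm_num) (by norm_num) (by norm_num) (by norm_num)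
  have h5 : psiN 5 ≤ Real.log ((60:ℕ):ℝ) := step_prime (n := 4) (V := 60) h4 (by norm_num) (by norm_num) (by norm_num)
  have h6 : psiN 6 ≤ Real.log ((60:ℕ):ℝ) := step_comp (n := 5) (p := 2) (q := 3) h5 (by norm_num) (by norm_num) (by norm_num) (by norm_num) (by norm_num)
  have h7 : psiN 7 ≤ Real.log ((420:ℕ):ℝ) := step_prime (n := 6) (V := 420) h6 (by norm_num) (by norm_num) (by norm_num)
  have h8 : psiN 8 ≤ Real.log ((840:ℕ):ℝ) := step_pow (n := 7) (p := 2) (k := 3) (V := 840) h7 (by norm_num) (by norm_num) (by norm_num) (by norm_num) (by norm_num)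
  have h9 : psiN 9 ≤ Real.log ((2520:ℕ):ℝ) := step_pow (n := 8) (p := 3) (k := 2) (V := 2520) h8 (by norm_num) (by norm_num) (by norm_num) (by norm_num) (by norm_num)
  have h10 : psiN 10 ≤ Real.log ((2520:ℕ):ℝ) := step_comp (n := 9) (p := 2) (q := 5) h9 (by norm_num) (by norm_num) (by norm_num) (by norm_num) (by norm_num)
  have h11 : psiN 11 ≤ Real.log ((27720:ℕ):ℝ) := step_prime (n := 10) (V := 27720) h10 (by norm_num) (by norm_num) (by norm_num)
  have h12 : psiN 12 ≤ Real.log ((27720:ℕ):ℝ) := step_comp (n := 11) (p := 2) (q := 3) h11 (by norm_num) (by norm_num) (by norm_num) (by norm_num) (by norm_num)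
  have h13 : psiN 13 ≤ Real.log ((360360:ℕ):ℝ) := step_prime (n := 12) (V := 360360) h12 (by norm_num) (by norm_num) (by norm_num)
  have h14 : psiN 14 ≤ Real.log ((360360:ℕ):ℝ) := step_comp (n := 13) (p := 2) (q := 7) h13 (by norm_num) (by norm_num) (by norm_num) (by norm_num) (by norm_num)
  have h15 : psiN 15 ≤ Real.log ((360360:ℕ):ℝ) := step_comp (n := 14) (p := 3) (q := 5) h14 (by norm_num) (by norm_num) (by norm_num) (by norm_num) (by norm_num)
  have h16 : psiN 16 ≤ Real.log ((720720:ℕ):ℝ) := step_pow (n := 15) (p := 2) (k := 4) (V := 720720) h15 (by norm_num) (by norm_num) (by norm_num) (by norm_num) (by norm_num)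
  have h17 : psiN 17 ≤ Real.log ((12252240:ℕ):ℝ) := step_prime (n := 16) (V := 12252240) h16 (by norm_num) (by norm_num) (by norm_num)
  have h18 : psiN 18 ≤ Real.log ((12252240:ℕ):ℝ) := step_comp (n := 17) (p := 2) (q := 3) h17 (by norm_num) (by norm_num) (by norm_num) (by norm_num) (by norm_num)
  have h19 : psiN 19 ≤ Real.log ((232792560:ℕ):ℝ) := step_prime (n := 18) (V := 232792560) h18 (by norm_num) (by norm_num) (by norm_num)
  have h20 : psiN 20 ≤ Real.log ((232792560:ℕ):ℝ) := step_comp (n := 19) (p := 2) (q := 5) h19 (by norm_num) (by norm_num) (by norm_num) (by norm_num) (by norm_num)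
  have h21 : psiN 21 ≤ Real.log ((232792560:ℕ):ℝ) := step_comp (n := 20) (p := 3) (q := 7) h20 (by norm_num) (by norm_num) (by norm_num) (by norm_num) (by norm_num)
  have h22 : psiN 22 ≤ Real.log ((232792560:ℕ):ℝ) := step_comp (n := 21) (p := 2) (q := 11) h21 (by norm_num) (by norm_num) (by norm_num) (by norm_num) (by norm_num)
  have h23 : psiN 23 ≤ Real.log ((5354228880:ℕ):ℝ) := step_prime (n := 22) (V := 5354228880) h22 (by norm_num) (by norm_num) (by norm_num)
  have h24 : psiN 24 ≤ Real.log ((5354228880:ℕ):ℝ) := step_comp (n := 23) (p := 2) (q := 3) h23 (by norm_num) (by norm_num) (by norm_num) (by norm_num) (by norm_num)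
  have h25 : psiN 25 ≤ Real.log ((26771144400:ℕ):ℝ) := step_pow (n := 24) (p := 5) (k := 2) (V := 26771144400) h24 (by norm_num) (by norm_num) (by norm_num) (by norm_num) (by norm_num)
  have h26 : psiN 26 ≤ Real.log ((26771144400:ℕ):ℝ) := step_comp (n := 25) (p := 2) (q := 13) h25 (by norm_num) (by norm_num) (by norm_num) (by norm_num) (by norm_num)
  have h27 : psiN 27 ≤ Real.log ((80313433200:ℕ):ℝ) := step_pow (n := 26) (p := 3) (k := 3) (V := 80313433200) h26 (by norm_num) (by norm_num) (by norm_num) (by norm_num) (by norm_num)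
  have h28 : psiN 28 ≤ Real.log ((80313433200:ℕ):ℝ) := step_comp (n := 27) (p := 2) (q := 7) h27 (by norm_num) (by norm_num) (by norm_num) (by norm_num) (by norm_num)
  have h29 : psiN 29 ≤ Real.log ((2329089562800:ℕ):ℝ) := step_prime (n := 28) (V := 2329089562800) h28 (by norm_num) (by norm_num) (by norm_num)
  have h30 : psiN 30 ≤ Real.log ((2329089562800:ℕ):ℝ) := step_comp (n := 29) (p := 2) (q := 3) h29 (by norm_num) (by norm_num) (by norm_num) (by norm_num) (by norm_num)
  have h31 : psiN 31 ≤ Real.log ((72201776446800:ℕ):ℝ) := step_prime (n := 30) (V := 72201776446800) h30 (by norm_num) (by norm_num) (by norm_num)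
  have h32 : psiN 32 ≤ Real.log ((144403552893600:ℕ):ℝ) := step_pow (n := 31) (p := 2) (k := 5) (V := 144403552893600) h31 (by norm_num) (by norm_num) (by norm_num) (by norm_num) (by norm_num)
  have h33 : psiN 33 ≤ Real.log ((144403552893600:ℕ):ℝ) := step_comp (n := 32) (p := 3) (q := 11) h32 (by norm_num) (by norm_num) (by norm_num) (by norm_num) (by norm_num)
  have h34 : psiN 34 ≤ Real.log ((144403552893600:ℕ):ℝ) := step_comp (n := 33) (p := 2) (q := 17) h33 (by norm_num) (by norm_num) (by norm_num) (by norm_num) (by norm_num)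
  have h35 : psiN 35 ≤ Real.log ((144403552893600:ℕ):ℝ) := step_comp (n := 34) (p := 5) (q := 7) h34 (by norm_num) (by norm_num) (by norm_num) (by norm_num) (by norm_num)
  have h36 : psiN 36 ≤ Real.log ((144403552893600:ℕ):ℝ) := step_comp (n := 35) (p := 2) (q := 3) h35 (by norm_num) (by norm_num) (by norm_num) (by norm_num) (by norm_num)
  have h37 : psiN 37 ≤ Real.log ((5342931457063200:ℕ):ℝ) := step_prime (n := 36) (V := 5342931457063200) h36 (by norm_num) (by norm_num) (by norm_num)
  have h38 : psiN 38 ≤ Real.log ((5342931457063200:ℕ):ℝ) := step_comp (n := 37) (p := 2) (q := 19) h37 (by norm_num) (by norm_num) (by norm_num) (by norm_num) (by norm_num)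
  have h39 : psiN 39 ≤ Real.log ((5342931457063200:ℕ):ℝ) := step_comp (n := 38) (p := 3) (q := 13) h38 (by norm_num) (by norm_num) (by norm_num) (by norm_num) (by norm_num)
  have h40 : psiN 40 ≤ Real.log ((5342931457063200:ℕ):ℝ) := step_comp (n := 39) (p := 2) (q := 5) h39 (by norm_num) (by norm_num) (by norm_num) (by norm_num) (by norm_num)
  have h41 : psiN 41 ≤ Real.log ((219060189739591200:ℕ):ℝ) := step_prime (n := 40) (V := 219060189739591200) h40 (by norm_num) (by norm_num) (by norm_num)
  have h42 : psiN 42 ≤ Real.log ((219060189739591200:ℕ):ℝ) := step_comp (n := 41) (p := 2) (q := 3) h41 (by norm_num) (by norm_num) (by norm_num) (by norm_num) (by norm_num)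
  have h43 : psiN 43 ≤ Real.log ((9419588158802421600:ℕ):ℝ) := step_prime (n := 42) (V := 9419588158802421600) h42 (by norm_num) (by norm_num) (by norm_num)
  have h44 : psiN 44 ≤ Real.log ((9419588158802421600:ℕ):ℝ) := step_comp (n := 43) (p := 2) (q := 11) h43 (by norm_num) (by norm_num) (by norm_num) (by norm_num) (by norm_num)
  have h45 : psiN 45 ≤ Real.log ((9419588158802421600:ℕ):ℝ) := step_comp (n := 44) (p := 3) (q := 5) h44 (by norm_num) (by norm_num) (by norm_num) (by norm_num) (by norm_num)
  have h46 : psiN 46 ≤ Real.log ((9419588158802421600:ℕ):ℝ) := step_comp (n := 45) (p := 2) (q := 23) h45 (by norm_num) (by norm_num) (by norm_num) (by norm_num) (by norm_num)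
  have h47 : psiN 47 ≤ Real.log ((442720643463713815200:ℕ):ℝ) := step_prime (n := 46) (V := 442720643463713815200) h46 (by norm_num) (by norm_num) (by norm_num)
  have h48 : psiN 48 ≤ Real.log ((442720643463713815200:ℕ):ℝ) := step_comp (n := 47) (p := 2) (q := 3) h47 (by norm_num) (by norm_num) (by norm_num) (by norm_num) (by norm_num)
  have h49 : psiN 49 ≤ Real.log ((3099044504245996706400:ℕ):ℝ) := step_pow (n := 48) (p := 7) (k := 2) (V := 3099044504245996706400) h48 (by norm_num) (by norm_num) (by norm_num) (by norm_num) (by norm_num)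
  have h50 : psiN 50 ≤ Real.log ((3099044504245996706400:ℕ):ℝ) := step_comp (n := 49) (p := 2) (q := 5) h49 (by norm_num) (by norm_num) (by norm_num) (by norm_num) (by norm_num)
  have h51 : psiN 51 ≤ Real.log ((3099044504245996706400:ℕ):ℝ) := step_comp (n := 50) (p := 3) (q := 17) h50 (by norm_num) (by norm_num) (by norm_num) (by norm_num) (by norm_num)
  have h52 : psiN 52 ≤ Real.log ((3099044504245996706400:ℕ):ℝ) := step_comp (n := 51) (p := 2) (q := 13) h51 (by norm_num) (by norm_num) (by norm_num) (by norm_num) (by norm_num)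
  have h53 : psiN 53 ≤ Real.log ((164249358725037825439200:ℕ):ℝ) := step_prime (n := 52) (V := 164249358725037825439200) h52 (by norm_num) (by norm_num) (by norm_num)
  have h54 : psiN 54 ≤ Real.log ((164249358725037825439200:ℕ):ℝ) := step_comp (n := 53) (p := 2) (q := 3) h53 (by norm_num) (by norm_num) (by norm_num) (by norm_num) (by norm_num)
  have h55 : psiN 55 ≤ Real.log ((164249358725037825439200:ℕ):ℝ) := step_comp (n := 54) (p := 5) (q := 11) h54 (by norm_num) (by norm_num) (by norm_num) (by norm_num) (by norm_num)
  have h56 : psiN 56 ≤ Real.log ((164249358725037825439200:ℕ):ℝ) := step_comp (n := 55) (p := 2) (q := 7) h55 (by norm_num) (by norm_num) (by norm_num) (by norm_num) (by norm_num)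
  have h57 : psiN 57 ≤ Real.log ((164249358725037825439200:ℕ):ℝ) := step_comp (n := 56) (p := 3) (q := 19) h56 (by norm_num) (by norm_num) (by norm_num) (by norm_num) (by norm_num)
  have h58 : psiN 58 ≤ Real.log ((164249358725037825439200:ℕ):ℝ) := step_comp (n := 57) (p := 2) (q := 29) h57 (by norm_num) (by norm_num) (by norm_num) (by norm_num) (by norm_num)
  have h59 : psiN 59 ≤ Real.log ((9690712164777231700912800:ℕ):ℝ) := step_prime (n := 58) (V := 9690712164777231700912800) h58 (by norm_num) (by norm_num) (by norm_num)
  have h60 : psiN 60 ≤ Real.log ((9690712164777231700912800:ℕ):ℝ) := step_comp (n := 59) (p := 2) (q := 3) h59 (by norm_num) (by norm_num) (by norm_num) (by norm_num) (by norm_num)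
  have h61 : psiN 61 ≤ Real.log ((591133442051411133755680800:ℕ):ℝ) := step_prime (n := 60) (V := 591133442051411133755680800) h60 (by norm_num) (by norm_num) (by norm_num)
  have h62 : psiN 62 ≤ Real.log ((591133442051411133755680800:ℕ):ℝ) := step_comp (n := 61) (p := 2) (q := 31) h61 (by norm_num) (by norm_num) (by norm_num) (by norm_num) (by norm_num)
  have h63 : psiN 63 ≤ Real.log ((591133442051411133755680800:ℕ):ℝ) := step_comp (n := 62) (p := 3) (q := 7) h62 (by norm_num) (by norm_num) (by norm_num) (by norm_num) (by norm_num)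
  have h64 : psiN 64 ≤ Real.log ((1182266884102822267511361600:ℕ):ℝ) := step_pow (n := 63) (p := 2) (k := 6) (V := 1182266884102822267511361600) h63 (by norm_num) (by norm_num) (by norm_num) (by norm_num) (by norm_num)
  have h65 : psiN 65 ≤ Real.log ((1182266884102822267511361600:ℕ):ℝ) := step_comp (n := 64) (p := 5) (q := 13) h64 (by norm_num) (by norm_num) (by norm_num) (by norm_num) (by norm_num)
  have h66 : psiN 66 ≤ Real.log ((1182266884102822267511361600:ℕ):ℝ) := step_comp (n := 65) (p := 2) (q := 3) h65 (by norm_num) (by norm_num) (by norm_num) (by norm_num) (by norm_num)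
  have h67 : psiN 67 ≤ Real.log ((79211881234889091923261227200:ℕ):ℝ) := step_prime (n := 66) (V := 79211881234889091923261227200) h66 (by norm_num) (by norm_num) (by norm_num)
  have h68 : psiN 68 ≤ Real.log ((79211881234889091923261227200:ℕ):ℝ) := step_comp (n := 67) (p := 2) (q := 17) h67 (by norm_num) (by norm_num) (by norm_num) (by norm_num) (by norm_num)
  have h69 : psiN 69 ≤ Real.log ((79211881234889091923261227200:ℕ):ℝ) := step_comp (n := 68) (p := 3) (q := 23) h68 (by norm_num) (by norm_num) (by norm_num) (by norm_num) (by norm_num)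
  have h70 : psiN 70 ≤ Real.log ((79211881234889091923261227200:ℕ):ℝ) := step_comp (n := 69) (p := 2) (q := 5) h69 (by norm_num) (by norm_num) (by norm_num) (by norm_num) (by norm_num)
  have h71 : psiN 71 ≤ Real.log ((5624043567677125526551547131200:ℕ):ℝ) := step_prime (n := 70) (V := 5624043567677125526551547131200) h70 (by norm_num) (by norm_num) (by norm_num)
  have h72 : psiN 72 ≤ Real.log ((5624043567677125526551547131200:ℕ):ℝ) := step_comp (n := 71) (p := 2) (q := 3) h71 (by norm_num) (by norm_num) (by norm_num) (by norm_num) (by norm_num)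
  have h73 : psiN 73 ≤ Real.log ((410555180440430163438262940577600:ℕ):ℝ) := step_prime (n := 72) (V := 410555180440430163438262940577600) h72 (by norm_num) (by norm_num) (by norm_num)
  have h74 : psiN 74 ≤ Real.log ((410555180440430163438262940577600:ℕ):ℝ) := step_comp (n := 73) (p := 2) (q := 37) h73 (by norm_num) (by norm_num) (by norm_num) (by norm_num) (by norm_num)
  have h75 : psiN 75 ≤ Real.log ((410555180440430163438262940577600:ℕ):ℝ) := step_comp (n := 74) (p := 3) (q := 5) h74 (by norm_num) (by norm_num) (by norm_num) (by norm_num) (by norm_num)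
  have h76 : psiN 76 ≤ Real.log ((410555180440430163438262940577600:ℕ):ℝ) := step_comp (n := 75) (p := 2) (q := 19) h75 (by norm_num) (by norm_num) (by norm_num) (by norm_num) (by norm_num)
  have h77 : psiN 77 ≤ Real.log ((410555180440430163438262940577600:ℕ):ℝ) := step_comp (n := 76) (p := 7) (q := 11) h76 (by norm_num) (by norm_num) (by norm_num) (by norm_num) (by norm_num)
  have h78 : psiN 78 ≤ Real.log ((410555180440430163438262940577600:ℕ):ℝ) := step_comp (n := 77) (p := 2) (q := 3) h77 (by norm_num) (by norm_num) (by norm_num) (by norm_num) (by norm_num)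
  have h79 : psiN 79 ≤ Real.log ((32433859254793982911622772305630400:ℕ):ℝ) := step_prime (n := 78) (V := 32433859254793982911622772305630400) h78 (by norm_num) (by norm_num) (by norm_num)
  have h80 : psiN 80 ≤ Real.log ((32433859254793982911622772305630400:ℕ):ℝ) := step_comp (n := 79) (p := 2) (q := 5) h79 (by norm_num) (by norm_num) (by norm_num) (by norm_num) (by norm_num)
  have h81 : psiN 81 ≤ Real.log ((97301577764381948734868316916891200:ℕ):ℝ) := step_pow (n := 80) (p := 3) (k := 4) (V := 97301577764381948734868316916891200) h80 (by norm_num) (by norm_num) (by norm_num) (by norm_num) (by norm_num)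
  have h82 : psiN 82 ≤ Real.log ((97301577764381948734868316916891200:ℕ):ℝ) := step_comp (n := 81) (p := 2) (q := 41) h81 (by norm_num) (by norm_num) (by norm_num) (by norm_num) (by norm_num)
  have h83 : psiN 83 ≤ Real.log ((8076030954443701744994070304101969600:ℕ):ℝ) := step_prime (n := 82) (V := 8076030954443701744994070304101969600) h82 (by norm_num) (by norm_num) (by norm_num)
  have h84 : psiN 84 ≤ Real.log ((8076030954443701744994070304101969600:ℕ):ℝ) := step_comp (n := 83) (p := 2) (q := 3) h83 (by norm_num) (by norm_num) (by norm_num) (by norm_num) (by norm_num)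
  have h85 : psiN 85 ≤ Real.log ((8076030954443701744994070304101969600:ℕ):ℝ) := step_comp (n := 84) (p := 5) (q := 17) h84 (by norm_num) (by norm_num) (by norm_num) (by norm_num) (by norm_num)
  have h86 : psiN 86 ≤ Real.log ((8076030954443701744994070304101969600:ℕ):ℝ) := step_comp (n := 85) (p := 2) (q := 43) h85 (by norm_num) (by norm_num) (by norm_num) (by norm_num) (by norm_num)
  have h87 : psiN 87 ≤ Real.log ((8076030954443701744994070304101969600:ℕ):ℝ) := step_comp (n := 86) (p := 3) (q := 29) h86 (by norm_num) (by norm_num) (by norm_num) (by norm_num) (by norm_num)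
  have h88 : psiN 88 ≤ Real.log ((8076030954443701744994070304101969600:ℕ):ℝ) := step_comp (n := 87) (p := 2) (q := 11) h87 (by norm_num) (by norm_num) (by norm_num) (by norm_num) (by norm_num)
  have h89 : psiN 89 ≤ Real.log ((718766754945489455304472257065075294400:ℕ):ℝ) := step_prime (n := 88) (V := 718766754945489455304472257065075294400) h88 (by norm_num) (by norm_num) (by norm_num)
  have h90 : psiN 90 ≤ Real.log ((718766754945489455304472257065075294400:ℕ):ℝ) := step_comp (n := 89) (p := 2) (q := 3) h89 (by norm_num) (by norm_num) (by norm_num) (by norm_num) (by norm_num)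
  have h91 : psiN 91 ≤ Real.log ((718766754945489455304472257065075294400:ℕ):ℝ) := step_comp (n := 90) (p := 7) (q := 13) h90 (by norm_num) (by norm_num) (by norm_num) (by norm_num) (by norm_num)
  have h92 : psiN 92 ≤ Real.log ((718766754945489455304472257065075294400:ℕ):ℝ) := step_comp (n := 91) (p := 2) (q := 23) h91 (by norm_num) (by norm_num) (by norm_num) (by norm_num) (by norm_num)
  have h93 : psiN 93 ≤ Real.log ((718766754945489455304472257065075294400:ℕ):ℝ) := step_comp (n := 92) (p := 3) (q := 31) h92 (by norm_num) (by norm_num) (by norm_num) (by norm_num) (by norm_num)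
  have h94 : psiN 94 ≤ Real.log ((718766754945489455304472257065075294400:ℕ):ℝ) := step_comp (n := 93) (p := 2) (q := 47) h93 (by norm_num) (by norm_num) (by norm_num) (by norm_num) (by norm_num)
  have h95 : psiN 95 ≤ Real.log ((718766754945489455304472257065075294400:ℕ):ℝ) := step_comp (n := 94) (p := 5) (q := 19) h94 (by norm_num) (by norm_num) (by norm_num) (by norm_num) (by norm_num)
  have h96 : psiN 96 ≤ Real.log ((718766754945489455304472257065075294400:ℕ):ℝ) := step_comp (n := 95) (p := 2) (q := 3) h95 (by norm_num) (by norm_num) (by norm_num) (by norm_num) (by norm_num)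
  have h97 : psiN 97 ≤ Real.log ((69720375229712477164533808935312303556800:ℕ):ℝ) := step_prime (n := 96) (V := 69720375229712477164533808935312303556800) h96 (by norm_num) (by norm_num) (by norm_num)
  have h98 : psiN 98 ≤ Real.log ((69720375229712477164533808935312303556800:ℕ):ℝ) := step_comp (n := 97) (p := 2) (q := 7) h97 (by norm_num) (by norm_num) (by norm_num) (by norm_num) (by norm_num)
  have h99 : psiN 99 ≤ Real.log ((69720375229712477164533808935312303556800:ℕ):ℝ) := step_comp (n := 98) (p := 3) (q := 11) h98 (by norm_num) (by norm_num) (by norm_num) (by norm_num) (by norm_num)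
  have h100 : psiN 100 ≤ Real.log ((69720375229712477164533808935312303556800:ℕ):ℝ) := step_comp (n := 99) (p := 2) (q := 5) h99 (by norm_num) (by norm_num) (by norm_num) (by norm_num) (by norm_num)
  have h101 : psiN 101 ≤ Real.log ((7041757898200960193617914702466542659236800:ℕ):ℝ) := step_prime (n := 100) (V := 7041757898200960193617914702466542659236800) h100 (by norm_num) (by norm_num) (by norm_num)
  have h102 : psiN 102 ≤ Real.log ((7041757898200960193617914702466542659236800:ℕ):ℝ) := step_comp (n := 101) (p := 2) (q := 3) h101 (by norm_num) (by norm_num) (by norm_num) (by norm_num) (by norm_num)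
  have h103 : psiN 103 ≤ Real.log ((725301063514698899942645214354053893901390400:ℕ):ℝ) := step_prime (n := 102) (V := 725301063514698899942645214354053893901390400) h102 (by norm_num) (by norm_num) (by norm_num)
  have h104 : psiN 104 ≤ Real.log ((725301063514698899942645214354053893901390400:ℕ):ℝ) := step_comp (n := 103) (p := 2) (q := 13) h103 (by norm_num) (by norm_num) (by norm_num) (by norm_num) (by norm_num)
  have h105 : psiN 105 ≤ Real.log ((725301063514698899942645214354053893901390400:ℕ):ℝ) := step_comp (n := 104) (p := 3) (q := 5) h104 (by norm_num) (by norm_num) (by norm_num) (by norm_num) (by norm_num)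
  have h106 : psiN 106 ≤ Real.log ((725301063514698899942645214354053893901390400:ℕ):ℝ) := step_comp (n := 105) (p := 2) (q := 53) h105 (by norm_num) (by norm_num) (by norm_num) (by norm_num) (by norm_num)
  have h107 : psiN 107 ≤ Real.log ((77607213796072782293863037935883766647448772800:ℕ):ℝ) := step_prime (n := 106) (V := 77607213796072782293863037935883766647448772800) h106 (by norm_num) (by norm_num) (by norm_num)
  have h108 : psiN 108 ≤ Real.log ((77607213796072782293863037935883766647448772800:ℕ):ℝ) := step_comp (n := 107) (p := 2) (q := 3) h107 (by norm_num) (by norm_num) (by norm_num) (by norm_num) (by norm_num)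
  have h109 : psiN 109 ≤ Real.log ((8459186303771933270031071135011330564571916235200:ℕ):ℝ) := step_prime (n := 108) (V := 8459186303771933270031071135011330564571916235200) h108 (by norm_num) (by norm_num) (by norm_num)
  have h110 : psiN 110 ≤ Real.log ((8459186303771933270031071135011330564571916235200:ℕ):ℝ) := step_comp (n := 109) (p := 2) (q := 5) h109 (by norm_num) (by norm_num) (by norm_num) (by norm_num) (by norm_num)
  have h111 : psiN 111 ≤ Real.log ((8459186303771933270031071135011330564571916235200:ℕ):ℝ) := step_comp (n := 110) (p := 3) (q := 37) h110 (by norm_num) (by norm_num) (by norm_num) (by norm_num) (by norm_num)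
  have h112 : psiN 112 ≤ Real.log ((8459186303771933270031071135011330564571916235200:ℕ):ℝ) := step_comp (n := 111) (p := 2) (q := 7) h111 (by norm_num) (by norm_num) (by norm_num) (by norm_num) (by norm_num)
  have h113 : psiN 113 ≤ Real.log ((955888052326228459513511038256280353796626534577600:ℕ):ℝ) := step_prime (n := 112) (V := 955888052326228459513511038256280353796626534577600) h112 (by norm_num) (by norm_num) (by norm_num)
  have h114 : psiN 114 ≤ Real.log ((955888052326228459513511038256280353796626534577600:ℕ):ℝ) := step_comp (n := 113) (p := 2) (q := 3) h113 (by norm_num) (by norm_num) (by norm_num) (by norm_num) (by norm_num)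
  have h115 : psiN 115 ≤ Real.log ((955888052326228459513511038256280353796626534577600:ℕ):ℝ) := step_comp (n := 114) (p := 5) (q := 23) h114 (by norm_num) (by norm_num) (by norm_num) (by norm_num) (by norm_num)
  have h116 : psiN 116 ≤ Real.log ((955888052326228459513511038256280353796626534577600:ℕ):ℝ) := step_comp (n := 115) (p := 2) (q := 29) h115 (by norm_num) (by norm_num) (by norm_num) (by norm_num) (by norm_num)
  have h117 : psiN 117 ≤ Real.log ((955888052326228459513511038256280353796626534577600:ℕ):ℝ) := step_comp (n := 116) (p := 3) (q := 13) h116 (by norm_num) (by norm_num) (by norm_num) (by norm_num) (by norm_num)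
  have h118 : psiN 118 ≤ Real.log ((955888052326228459513511038256280353796626534577600:ℕ):ℝ) := step_comp (n := 117) (p := 2) (q := 59) h117 (by norm_num) (by norm_num) (by norm_num) (by norm_num) (by norm_num)
  have h119 : psiN 119 ≤ Real.log ((955888052326228459513511038256280353796626534577600:ℕ):ℝ) := step_comp (n := 118) (p := 7) (q := 17) h118 (by norm_num) (by norm_num) (by norm_num) (by norm_num) (by norm_num)
  have h120 : psiN 120 ≤ Real.log ((955888052326228459513511038256280353796626534577600:ℕ):ℝ) := step_comp (n := 119) (p := 2) (q := 3) h119 (by norm_num) (by norm_num) (by norm_num) (by norm_num) (by norm_num)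
  have h121 : psiN 121 ≤ Real.log ((10514768575588513054648621420819083891762891880353600:ℕ):ℝ) := step_pow (n := 120) (p := 11) (k := 2) (V := 10514768575588513054648621420819083891762891880353600) h120 (by norm_num) (by norm_num) (by norm_num) (by norm_num) (by norm_num)
  have h122 : psiN 122 ≤ Real.log ((10514768575588513054648621420819083891762891880353600:ℕ):ℝ) := step_comp (n := 121) (p := 2) (q := 61) h121 (by norm_num) (by norm_num) (by norm_num) (by norm_num) (by norm_num)
  have h123 : psiN 123 ≤ Real.log ((10514768575588513054648621420819083891762891880353600:ℕ):ℝ) := step_comp (n := 122) (p := 3) (q := 41) h122 (by norm_num) (by norm_num) (by norm_num) (by norm_num) (by norm_num)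
  have h124 : psiN 124 ≤ Real.log ((10514768575588513054648621420819083891762891880353600:ℕ):ℝ) := step_comp (n := 123) (p := 2) (q := 31) h123 (by norm_num) (by norm_num) (by norm_num) (by norm_num) (by norm_num)
  have h125 : psiN 125 ≤ Real.log ((52573842877942565273243107104095419458814459401768000:ℕ):ℝ) := step_pow (n := 124) (p := 5) (k := 3) (V := 52573842877942565273243107104095419458814459401768000) h124 (by norm_num) (by norm_num) (by norm_num) (by norm_num) (by norm_num)
  have h126 : psiN 126 ≤ Real.log ((52573842877942565273243107104095419458814459401768000:ℕ):ℝ) := step_comp (n := 125) (p := 2) (q := 3) h125 (by norm_num) (by norm_num) (by norm_num) (by norm_num) (by norm_num)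
  have h127 : psiN 127 ≤ Real.log ((6676878045498705789701874602220118271269436344024536000:ℕ):ℝ) := step_prime (n := 126) (V := 6676878045498705789701874602220118271269436344024536000) h126 (by norm_num) (by norm_num) (by norm_num)
  have h128 : psiN 128 ≤ Real.log ((13353756090997411579403749204440236542538872688049072000:ℕ):ℝ) := step_pow (n := 127) (p := 2) (k := 7) (V := 13353756090997411579403749204440236542538872688049072000) h127 (by norm_num) (by norm_num) (by norm_num) (by norm_num) (by norm_num)
  have h129 : psiN 129 ≤ Real.log ((13353756090997411579403749204440236542538872688049072000:ℕ):ℝ) := step_comp (n := 128) (p := 3) (q := 43) h128 (by norm_num) (by norm_num) (by norm_num) (by norm_num) (by norm_num)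
  have h130 : psiN 130 ≤ Real.log ((13353756090997411579403749204440236542538872688049072000:ℕ):ℝ) := step_comp (n := 129) (p := 2) (q := 5) h129 (by norm_num) (by norm_num) (by norm_num) (by norm_num) (by norm_num)
  have h131 : psiN 131 ≤ Real.log ((1749342047920660916901891145781670987072592322134428432000:ℕ):ℝ) := step_prime (n := 130) (V := 1749342047920660916901891145781670987072592322134428432000) h130 (by norm_num) (by norm_num) (by norm_num)
  have h132 : psiN 132 ≤ Real.log ((1749342047920660916901891145781670987072592322134428432000:ℕ):ℝ) := step_comp (n := 131) (p := 2) (q := 3) h131 (by norm_num) (by norm_num) (by norm_num) (by norm_num) (by norm_num)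
  have h133 : psiN 133 ≤ Real.log ((1749342047920660916901891145781670987072592322134428432000:ℕ):ℝ) := step_comp (n := 132) (p := 7) (q := 19) h132 (by norm_num) (by norm_num) (by norm_num) (by norm_num) (by norm_num)
  have h134 : psiN 134 ≤ Real.log ((1749342047920660916901891145781670987072592322134428432000:ℕ):ℝ) := step_comp (n := 133) (p := 2) (q := 67) h133 (by norm_num) (by norm_num) (by norm_num) (by norm_num) (by norm_num)
  have h135 : psiN 135 ≤ Real.log ((1749342047920660916901891145781670987072592322134428432000:ℕ):ℝ) := step_comp (n := 134) (p := 3) (q := 5) h134 (by norm_num) (by norm_num) (by norm_num) (by norm_num) (by norm_num)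
  have h136 : psiN 136 ≤ Real.log ((1749342047920660916901891145781670987072592322134428432000:ℕ):ℝ) := step_comp (n := 135) (p := 2) (q := 17) h135 (by norm_num) (by norm_num) (by norm_num) (by norm_num) (by norm_num)
  have h137 : psiN 137 ≤ Real.log ((239659860565130545615559086972088925228945148132416695184000:ℕ):ℝ) := step_prime (n := 136) (V := 239659860565130545615559086972088925228945148132416695184000) h136 (by norm_num) (by norm_num) (by norm_num)
  have h138 : psiN 138 ≤ Real.log ((239659860565130545615559086972088925228945148132416695184000:ℕ):ℝ) := step_comp (n := 137) (p := 2) (q := 3) h137 (by norm_num) (by norm_num) (by norm_num) (by norm_num) (by norm_num)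
  have h139 : psiN 139 ≤ Real.log ((33312720618553145840562713089120360606823375590405920630576000:ℕ):ℝ) := step_prime (n := 138) (V := 33312720618553145840562713089120360606823375590405920630576000) h138 (by norm_num) (by norm_num) (by norm_num)
  have h140 : psiN 140 ≤ Real.log ((33312720618553145840562713089120360606823375590405920630576000:ℕ):ℝ) := step_comp (n := 139) (p := 2) (q := 5) h139 (by norm_num) (by norm_num) (by norm_num) (by norm_num) (by norm_num)
  have h141 : psiN 141 ≤ Real.log ((33312720618553145840562713089120360606823375590405920630576000:ℕ):ℝ) := step_comp (n := 140) (p := 3) (q := 47) h140 (by norm_num) (by norm_num) (by norm_num) (by norm_num) (by norm_num)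
  have h142 : psiN 142 ≤ Real.log ((33312720618553145840562713089120360606823375590405920630576000:ℕ):ℝ) := step_comp (n := 141) (p := 2) (q := 71) h141 (by norm_num) (by norm_num) (by norm_num) (by norm_num) (by norm_num)
  have h143 : psiN 143 ≤ Real.log ((33312720618553145840562713089120360606823375590405920630576000:ℕ):ℝ) := step_comp (n := 142) (p := 11) (q := 13) h142 (by norm_num) (by norm_num) (by norm_num) (by norm_num) (by norm_num)
  have h144 : psiN 144 ≤ Real.log ((33312720618553145840562713089120360606823375590405920630576000:ℕ):ℝ) := step_comp (n := 143) (p := 2) (q := 3) h143 (by norm_num) (by norm_num) (by norm_num) (by norm_num) (by norm_num)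
  have h145 : psiN 145 ≤ Real.log ((33312720618553145840562713089120360606823375590405920630576000:ℕ):ℝ) := step_comp (n := 144) (p := 5) (q := 29) h144 (by norm_num) (by norm_num) (by norm_num) (by norm_num) (by norm_num)
  have h146 : psiN 146 ≤ Real.log ((33312720618553145840562713089120360606823375590405920630576000:ℕ):ℝ) := step_comp (n := 145) (p := 2) (q := 73) h145 (by norm_num) (by norm_num) (by norm_num) (by norm_num) (by norm_num)
  have h147 : psiN 147 ≤ Real.log ((33312720618553145840562713089120360606823375590405920630576000:ℕ):ℝ) := step_comp (n := 146) (p := 3) (q := 7) h146 (by norm_num) (by norm_num) (by norm_num) (by norm_num) (by norm_num)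
  have h148 : psiN 148 ≤ Real.log ((33312720618553145840562713089120360606823375590405920630576000:ℕ):ℝ) := step_comp (n := 147) (p := 2) (q := 37) h147 (by norm_num) (by norm_num) (by norm_num) (by norm_num) (by norm_num)
  have h149 : psiN 149 ≤ Real.log ((4963595372164418730243844250278933730416682962970482173955824000:ℕ):ℝ) := step_prime (n := 148) (V := 4963595372164418730243844250278933730416682962970482173955824000) h148 (by norm_num) (by norm_num) (by norm_num)
  have h150 : psiN 150 ≤ Real.log ((4963595372164418730243844250278933730416682962970482173955824000:ℕ):ℝ) := step_comp (n := 149) (p := 2) (q := 3) h149 (by norm_num) (by norm_num) (by norm_num) (by norm_num) (by norm_num)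
  have h151 : psiN 151 ≤ Real.log ((749502901196827228266820481792118993292919127408542808267329424000:ℕ):ℝ) := step_prime (n := 150) (V := 749502901196827228266820481792118993292919127408542808267329424000) h150 (by norm_num) (by norm_num) (by norm_num)
  have h152 : psiN 152 ≤ Real.log ((749502901196827228266820481792118993292919127408542808267329424000:ℕ):ℝ) := step_comp (n := 151) (p := 2) (q := 19) h151 (by norm_num) (by norm_num) (by norm_num) (by norm_num) (by norm_num)
  have h153 : psiN 153 ≤ Real.log ((749502901196827228266820481792118993292919127408542808267329424000:ℕ):ℝ) := step_comp (n := 152) (p := 3) (q := 17) h152 (by norm_num) (by norm_num) (by norm_num) (by norm_num) (by norm_num)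
  have h154 : psiN 154 ≤ Real.log ((749502901196827228266820481792118993292919127408542808267329424000:ℕ):ℝ) := step_comp (n := 153) (p := 2) (q := 7) h153 (by norm_num) (by norm_num) (by norm_num) (by norm_num) (by norm_num)
  have h155 : psiN 155 ≤ Real.log ((749502901196827228266820481792118993292919127408542808267329424000:ℕ):ℝ) := step_comp (n := 154) (p := 5) (q := 31) h154 (by norm_num) (by norm_num) (by norm_num) (by norm_num) (by norm_num)
  have h156 : psiN 156 ≤ Real.log ((749502901196827228266820481792118993292919127408542808267329424000:ℕ):ℝ) := step_comp (n := 155) (p := 2) (q := 3) h155 (by norm_num) (by norm_num) (by norm_num) (by norm_num) (by norm_num)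
  have h157 : psiN 157 ≤ Real.log ((117671955487901874837890815641362681946988303003141220897970719568000:ℕ):ℝ) := step_prime (n := 156) (V := 117671955487901874837890815641362681946988303003141220897970719568000) h156 (by norm_num) (by norm_num) (by norm_num)
  have h158 : psiN 158 ≤ Real.log ((117671955487901874837890815641362681946988303003141220897970719568000:ℕ):ℝ) := step_comp (n := 157) (p := 2) (q := 79) h157 (by norm_num) (by norm_num) (by norm_num) (by norm_num) (by norm_num)
  have h159 : psiN 159 ≤ Real.log ((117671955487901874837890815641362681946988303003141220897970719568000:ℕ):ℝ) := step_comp (n := 158) (p := 3) (q := 53) h158 (by norm_num) (by norm_num) (by norm_num) (by norm_num) (by norm_num)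
  have h160 : psiN 160 ≤ Real.log ((117671955487901874837890815641362681946988303003141220897970719568000:ℕ):ℝ) := step_comp (n := 159) (p := 2) (q := 5) h159 (by norm_num) (by norm_num) (by norm_num) (by norm_num) (by norm_num)
  have h161 : psiN 161 ≤ Real.log ((117671955487901874837890815641362681946988303003141220897970719568000:ℕ):ℝ) := step_comp (n := 160) (p := 7) (q := 23) h160 (by norm_num) (by norm_num) (by norm_num) (by norm_num) (by norm_num)
  have h162 : psiN 162 ≤ Real.log ((117671955487901874837890815641362681946988303003141220897970719568000:ℕ):ℝ) := step_comp (n := 161) (p := 2) (q := 3) h161 (by norm_num) (by norm_num) (by norm_num) (by norm_num) (by norm_num)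
  have h163 : psiN 163 ≤ Real.log ((19180528744528005598576202949542117157359093389512019006369227289584000:ℕ):ℝ) := step_prime (n := 162) (V := 19180528744528005598576202949542117157359093389512019006369227289584000) h162 (by norm_num) (by norm_num) (by norm_num)
  have h164 : psiN 164 ≤ Real.log ((19180528744528005598576202949542117157359093389512019006369227289584000:ℕ):ℝ) := step_comp (n := 163) (p := 2) (q := 41) h163 (by norm_num) (by norm_num) (by norm_num) (by norm_num) (by norm_num)
  have h165 : psiN 165 ≤ Real.log ((19180528744528005598576202949542117157359093389512019006369227289584000:ℕ):ℝ) := step_comp (n := 164) (p := 3) (q := 5) h164 (by norm_num) (by norm_num) (by norm_num) (by norm_num) (by norm_num)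
  have h166 : psiN 166 ≤ Real.log ((19180528744528005598576202949542117157359093389512019006369227289584000:ℕ):ℝ) := step_comp (n := 165) (p := 2) (q := 83) h165 (by norm_num) (by norm_num) (by norm_num) (by norm_num) (by norm_num)
  have h167 : psiN 167 ≤ Real.log ((3203148300336176934962225892573533565278968596048507174063660957360528000:ℕ):ℝ) := step_prime (n := 166) (V := 3203148300336176934962225892573533565278968596048507174063660957360528000) h166 (by norm_num) (by norm_num) (by norm_num)
  have h168 : psiN 168 ≤ Real.log ((3203148300336176934962225892573533565278968596048507174063660957360528000:ℕ):ℝ) := step_comp (n := 167) (p := 2) (q := 3) h167 (by norm_num) (by norm_num) (by norm_num) (by norm_num) (by norm_num)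
  have h169 : psiN 169 ≤ Real.log ((41640927904370300154508936603455936348626591748630593262827592445686864000:ℕ):ℝ) := step_pow (n := 168) (p := 13) (k := 2) (V := 41640927904370300154508936603455936348626591748630593262827592445686864000) h168 (by norm_num) (by norm_num) (by norm_num) (by norm_num) (by norm_num)
  have h170 : psiN 170 ≤ Real.log ((41640927904370300154508936603455936348626591748630593262827592445686864000:ℕ):ℝ) := step_comp (n := 169) (p := 2) (q := 5) h169 (by norm_num) (by norm_num) (by norm_num) (by norm_num) (by norm_num)
  have h171 : psiN 171 ≤ Real.log ((41640927904370300154508936603455936348626591748630593262827592445686864000:ℕ):ℝ) := step_comp (n := 170) (p := 3) (q := 19) h170 (by norm_num) (by norm_num) (by norm_num) (by norm_num) (by norm_num)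
  have h172 : psiN 172 ≤ Real.log ((41640927904370300154508936603455936348626591748630593262827592445686864000:ℕ):ℝ) := step_comp (n := 171) (p := 2) (q := 43) h171 (by norm_num) (by norm_num) (by norm_num) (by norm_num) (by norm_num)
  have h173 : psiN 173 ≤ Real.log ((7203880527456061926730046032397876988312400372513092634469173493103827472000:ℕ):ℝ) := step_prime (n := 172) (V := 7203880527456061926730046032397876988312400372513092634469173493103827472000) h172 (by norm_num) (by norm_num) (by norm_num)
  have h174 : psiN 174 ≤ Real.log ((7203880527456061926730046032397876988312400372513092634469173493103827472000:ℕ):ℝ) := step_comp (n := 173) (p := 2) (q := 3) h173 (by norm_num) (by norm_num) (by norm_num) (by norm_num) (by norm_num)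
  have h175 : psiN 175 ≤ Real.log ((7203880527456061926730046032397876988312400372513092634469173493103827472000:ℕ):ℝ) := step_comp (n := 174) (p := 5) (q := 7) h174 (by norm_num) (by norm_num) (by norm_num) (by norm_num) (by norm_num)
  have h176 : psiN 176 ≤ Real.log ((7203880527456061926730046032397876988312400372513092634469173493103827472000:ℕ):ℝ) := step_comp (n := 175) (p := 2) (q := 11) h175 (by norm_num) (by norm_num) (by norm_num) (by norm_num) (by norm_num)
  have h177 : psiN 177 ≤ Real.log ((7203880527456061926730046032397876988312400372513092634469173493103827472000:ℕ):ℝ) := step_comp (n := 176) (p := 3) (q := 59) h176 (by norm_num) (by norm_num) (by norm_num) (by norm_num) (by norm_num)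
  have h178 : psiN 178 ≤ Real.log ((7203880527456061926730046032397876988312400372513092634469173493103827472000:ℕ):ℝ) := step_comp (n := 177) (p := 2) (q := 89) h177 (by norm_num) (by norm_num) (by norm_num) (by norm_num) (by norm_num)
  have h179 : psiN 179 ≤ Real.log ((1289494614414635084884678239799219980907919666679843581569982055265585117488000:ℕ):ℝ) := step_prime (n := 178) (V := 1289494614414635084884678239799219980907919666679843581569982055265585117488000) h178 (by norm_num) (by norm_num) (by norm_num)
  have h180 : psiN 180 ≤ Real.log ((1289494614414635084884678239799219980907919666679843581569982055265585117488000:ℕ):ℝ) := step_comp (n := 179) (p := 2) (q := 3) h179 (by norm_num) (by norm_num) (by norm_num) (by norm_num) (by norm_num)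
  have h181 : psiN 181 ≤ Real.log ((233398525209048950364126761403658816544333459669051688264166752003070906265328000:ℕ):ℝ) := step_prime (n := 180) (V := 233398525209048950364126761403658816544333459669051688264166752003070906265328000) h180 (by norm_num) (by norm_num) (by norm_num)
  have h182 : psiN 182 ≤ Real.log ((233398525209048950364126761403658816544333459669051688264166752003070906265328000:ℕ):ℝ) := step_comp (n := 181) (p := 2) (q := 7) h181 (by norm_num) (by norm_num) (by norm_num) (by norm_num) (by norm_num)
  have h183 : psiN 183 ≤ Real.log ((233398525209048950364126761403658816544333459669051688264166752003070906265328000:ℕ):ℝ) := step_comp (n := 182) (p := 3) (q := 61) h182 (by norm_num) (by norm_num) (by norm_num) (by norm_num) (by norm_num)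
  have h184 : psiN 184 ≤ Real.log ((233398525209048950364126761403658816544333459669051688264166752003070906265328000:ℕ):ℝ) := step_comp (n := 183) (p := 2) (q := 23) h183 (by norm_num) (by norm_num) (by norm_num) (by norm_num) (by norm_num)
  have h185 : psiN 185 ≤ Real.log ((233398525209048950364126761403658816544333459669051688264166752003070906265328000:ℕ):ℝ) := step_comp (n := 184) (p := 5) (q := 37) h184 (by norm_num) (by norm_num) (by norm_num) (by norm_num) (by norm_num)
  have h186 : psiN 186 ≤ Real.log ((233398525209048950364126761403658816544333459669051688264166752003070906265328000:ℕ):ℝ) := step_comp (n := 185) (p := 2) (q := 3) h185 (by norm_num) (by norm_num) (by norm_num) (by norm_num) (by norm_num)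
  have h187 : psiN 187 ≤ Real.log ((233398525209048950364126761403658816544333459669051688264166752003070906265328000:ℕ):ℝ) := step_comp (n := 186) (p := 11) (q := 17) h186 (by norm_num) (by norm_num) (by norm_num) (by norm_num) (by norm_num)
  have h188 : psiN 188 ≤ Real.log ((233398525209048950364126761403658816544333459669051688264166752003070906265328000:ℕ):ℝ) := step_comp (n := 187) (p := 2) (q := 47) h187 (by norm_num) (by norm_num) (by norm_num) (by norm_num) (by norm_num)
  have h189 : psiN 189 ≤ Real.log ((233398525209048950364126761403658816544333459669051688264166752003070906265328000:ℕ):ℝ) := step_comp (n := 188) (p := 3) (q := 7) h188 (by norm_num) (by norm_num) (by norm_num) (by norm_num) (by norm_num)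
  have h190 : psiN 190 ≤ Real.log ((233398525209048950364126761403658816544333459669051688264166752003070906265328000:ℕ):ℝ) := step_comp (n := 189) (p := 2) (q := 5) h189 (by norm_num) (by norm_num) (by norm_num) (by norm_num) (by norm_num)
  have h191 : psiN 191 ≤ Real.log ((44579118314928349519548211428098833959967690796788872458455849632586543096677648000:ℕ):ℝ) := step_prime (n := 190) (V := 44579118314928349519548211428098833959967690796788872458455849632586543096677648000) h190 (by norm_num) (by norm_num) (by norm_num)
  have h192 : psiN 192 ≤ Real.log ((44579118314928349519548211428098833959967690796788872458455849632586543096677648000:ℕ):ℝ) := step_comp (n := 191) (p := 2) (q := 3) h191 (by norm_num) (by norm_num) (by norm_num) (by norm_num) (by norm_num)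
  have h193 : psiN 193 ≤ Real.log ((8603769834781171457272804805623074954273764323780252384481978979089202817658786064000:ℕ):ℝ) := step_prime (n := 192) (V := 8603769834781171457272804805623074954273764323780252384481978979089202817658786064000) h192 (by norm_num) (by norm_num) (by norm_num)
  have h194 : psiN 194 ≤ Real.log ((8603769834781171457272804805623074954273764323780252384481978979089202817658786064000:ℕ):ℝ) := step_comp (n := 193) (p := 2) (q := 97) h193 (by norm_num) (by norm_num) (by norm_num) (by norm_num) (by norm_num)
  have h195 : psiN 195 ≤ Real.log ((8603769834781171457272804805623074954273764323780252384481978979089202817658786064000:ℕ):ℝ) := step_comp (n := 194) (p := 3) (q := 5) h194 (by norm_num) (by norm_num) (by norm_num) (by norm_num) (by norm_num)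
  have h196 : psiN 196 ≤ Real.log ((8603769834781171457272804805623074954273764323780252384481978979089202817658786064000:ℕ):ℝ) := step_comp (n := 195) (p := 2) (q := 7) h195 (by norm_num) (by norm_num) (by norm_num) (by norm_num) (by norm_num)
  have h197 : psiN 197 ≤ Real.log ((1694942657451890777082742546707745765991931571784709719742949858880572955078780854608000:ℕ):ℝ) := step_prime (n := 196) (V := 1694942657451890777082742546707745765991931571784709719742949858880572955078780854608000) h196 (by norm_num) (by norm_num) (by norm_num)
  have h198 : psiN 198 ≤ Real.log ((1694942657451890777082742546707745765991931571784709719742949858880572955078780854608000:ℕ):ℝ) := step_comp (n := 197) (p := 2) (q := 3) h197 (by norm_num) (by norm_num) (by norm_num) (by norm_num) (by norm_num)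
  have h199 : psiN 199 ≤ Real.log ((337293588832926264639465766794841407432394382785157234228847021917234018060677390066992000:ℕ):ℝ) := step_prime (n := 198) (V := 337293588832926264639465766794841407432394382785157234228847021917234018060677390066992000) h198 (by norm_num) (by norm_num) (by norm_num)
  have h200 : psiN 200 ≤ Real.log ((337293588832926264639465766794841407432394382785157234228847021917234018060677390066992000:ℕ):ℝ) := step_comp (n := 199) (p := 2) (q := 5) h199 (by norm_num) (by norm_num) (by norm_num) (by norm_num) (by norm_num)
  have h201 : psiN 201 ≤ Real.log ((337293588832926264639465766794841407432394382785157234228847021917234018060677390066992000:ℕ):ℝ) := step_comp (n := 200) (p := 3) (q := 67) h200 (by norm_num) (by norm_num) (by norm_num) (by norm_num) (by norm_num)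
  have h202 : psiN 202 ≤ Real.log ((337293588832926264639465766794841407432394382785157234228847021917234018060677390066992000:ℕ):ℝ) := step_comp (n := 201) (p := 2) (q := 101) h201 (by norm_num) (by norm_num) (by norm_num) (by norm_num) (by norm_num)
  have h203 : psiN 203 ≤ Real.log ((337293588832926264639465766794841407432394382785157234228847021917234018060677390066992000:ℕ):ℝ) := step_comp (n := 202) (p := 7) (q := 29) h202 (by norm_num) (by norm_num) (by norm_num) (by norm_num) (by norm_num)
  have h204 : psiN 204 ≤ Real.log ((337293588832926264639465766794841407432394382785157234228847021917234018060677390066992000:ℕ):ℝ) := step_comp (n := 203) (p := 2) (q := 3) h203 (by norm_num) (by norm_num) (by norm_num) (by norm_num) (by norm_num)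
  have h205 : psiN 205 ≤ Real.log ((337293588832926264639465766794841407432394382785157234228847021917234018060677390066992000:ℕ):ℝ) := step_comp (n := 204) (p := 5) (q := 41) h204 (by norm_num) (by norm_num) (by norm_num) (by norm_num) (by norm_num)
  have h206 : psiN 206 ≤ Real.log ((337293588832926264639465766794841407432394382785157234228847021917234018060677390066992000:ℕ):ℝ) := step_comp (n := 205) (p := 2) (q := 103) h205 (by norm_num) (by norm_num) (by norm_num) (by norm_num) (by norm_num)
  have h207 : psiN 207 ≤ Real.log ((337293588832926264639465766794841407432394382785157234228847021917234018060677390066992000:ℕ):ℝ) := step_comp (n := 206) (p := 3) (q := 23) h206 (by norm_num) (by norm_num) (by norm_num) (by norm_num) (by norm_num)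
  have h208 : psiN 208 ≤ Real.log ((337293588832926264639465766794841407432394382785157234228847021917234018060677390066992000:ℕ):ℝ) := step_comp (n := 207) (p := 2) (q := 13) h207 (by norm_num) (by norm_num) (by norm_num) (by norm_num) (by norm_num)
  have h209 : psiN 209 ≤ Real.log ((337293588832926264639465766794841407432394382785157234228847021917234018060677390066992000:ℕ):ℝ) := step_comp (n := 208) (p := 11) (q := 19) h208 (by norm_num) (by norm_num) (by norm_num) (by norm_num) (by norm_num)
  have h210 : psiN 210 ≤ Real.log ((337293588832926264639465766794841407432394382785157234228847021917234018060677390066992000:ℕ):ℝ) := step_comp (n := 209) (p := 2) (q := 3) h209 (by norm_num) (by norm_num) (by norm_num) (by norm_num) (by norm_num)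
  have h211 : psiN 211 ≤ Real.log ((71168947243747441838927276793711536968235214767668176422286721624536377810802929304135312000:ℕ):ℝ) := step_prime (n := 210) (V := 71168947243747441838927276793711536968235214767668176422286721624536377810802929304135312000) h210 (by norm_num) (by norm_num) (by norm_num)
  have h212 : psiN 212 ≤ Real.log ((71168947243747441838927276793711536968235214767668176422286721624536377810802929304135312000:ℕ):ℝ) := step_comp (n := 211) (p := 2) (q := 53) h211 (by norm_num) (by norm_num) (by norm_num) (by norm_num) (by norm_num)
  have h213 : psiN 213 ≤ Real.log ((71168947243747441838927276793711536968235214767668176422286721624536377810802929304135312000:ℕ):ℝ) := step_comp (n := 212) (p := 3) (q := 71) h212 (by norm_num) (by norm_num) (by norm_num) (by norm_num) (by norm_num)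
  have h214 : psiN 214 ≤ Real.log ((71168947243747441838927276793711536968235214767668176422286721624536377810802929304135312000:ℕ):ℝ) := step_comp (n := 213) (p := 2) (q := 107) h213 (by norm_num) (by norm_num) (by norm_num) (by norm_num) (by norm_num)
  have h215 : psiN 215 ≤ Real.log ((71168947243747441838927276793711536968235214767668176422286721624536377810802929304135312000:ℕ):ℝ) := step_comp (n := 214) (p := 5) (q := 43) h214 (by norm_num) (by norm_num) (by norm_num) (by norm_num) (by norm_num)
  have h216 : psiN 216 ≤ Real.log ((71168947243747441838927276793711536968235214767668176422286721624536377810802929304135312000:ℕ):ℝ) := step_comp (n := 215) (p := 2) (q := 3) h215 (by norm_num) (by norm_num) (by norm_num) (by norm_num) (by norm_num)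
  have h217 : psiN 217 ≤ Real.log ((71168947243747441838927276793711536968235214767668176422286721624536377810802929304135312000:ℕ):ℝ) := step_comp (n := 216) (p := 7) (q := 31) h216 (by norm_num) (by norm_num) (by norm_num) (by norm_num) (by norm_num)
  have h218 : psiN 218 ≤ Real.log ((71168947243747441838927276793711536968235214767668176422286721624536377810802929304135312000:ℕ):ℝ) := step_comp (n := 217) (p := 2) (q := 109) h217 (by norm_num) (by norm_num) (by norm_num) (by norm_num) (by norm_num)
  have h219 : psiN 219 ≤ Real.log ((71168947243747441838927276793711536968235214767668176422286721624536377810802929304135312000:ℕ):ℝ) := step_comp (n := 218) (p := 3) (q := 73) h218 (by norm_num) (by norm_num) (by norm_num) (by norm_num) (by norm_num)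
  have h220 : psiN 220 ≤ Real.log ((71168947243747441838927276793711536968235214767668176422286721624536377810802929304135312000:ℕ):ℝ) := step_comp (n := 219) (p := 2) (q := 5) h219 (by norm_num) (by norm_num) (by norm_num) (by norm_num) (by norm_num)
  have h221 : psiN 221 ≤ Real.log ((71168947243747441838927276793711536968235214767668176422286721624536377810802929304135312000:ℕ):ℝ) := step_comp (n := 220) (p := 13) (q := 17) h220 (by norm_num) (by norm_num) (by norm_num) (by norm_num) (by norm_num)
  have h222 : psiN 222 ≤ Real.log ((71168947243747441838927276793711536968235214767668176422286721624536377810802929304135312000:ℕ):ℝ) := step_comp (n := 221) (p := 2) (q := 3) h221 (by norm_num) (by norm_num) (by norm_num) (by norm_num) (by norm_num)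
  have h223 : psiN 223 ≤ Real.log ((15870675235355679530080782724997672743916452893190003342169938922271612251809053234822174576000:ℕ):ℝ) := step_prime (n := 222) (V := 15870675235355679530080782724997672743916452893190003342169938922271612251809053234822174576000) h222 (by norm_num) (by norm_num) (by norm_num)
  have h224 : psiN 224 ≤ Real.log ((15870675235355679530080782724997672743916452893190003342169938922271612251809053234822174576000:ℕ):ℝ) := step_comp (n := 223) (p := 2) (q := 7) h223 (by norm_num) (by norm_num) (by norm_num) (by norm_num) (by norm_num)
  have h225 : psiN 225 ≤ Real.log ((15870675235355679530080782724997672743916452893190003342169938922271612251809053234822174576000:ℕ):ℝ) := step_comp (n := 224) (p := 3) (q := 5) h224 (by norm_num) (by norm_num) (by norm_num) (by norm_num) (by norm_num)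
  have h226 : psiN 226 ≤ Real.log ((15870675235355679530080782724997672743916452893190003342169938922271612251809053234822174576000:ℕ):ℝ) := step_comp (n := 225) (p := 2) (q := 113) h225 (by norm_num) (by norm_num) (by norm_num) (by norm_num) (by norm_num)
  have h227 : psiN 227 ≤ Real.log ((3602643278425739253328337678574471712869034806754130758672576135355655981160655084304633628752000:ℕ):ℝ) := step_prime (n := 226) (V := 3602643278425739253328337678574471712869034806754130758672576135355655981160655084304633628752000) h226 (by norm_num) (by norm_num) (by norm_num)
  have h228 : psiN 228 ≤ Real.log ((3602643278425739253328337678574471712869034806754130758672576135355655981160655084304633628752000:ℕ):ℝ) := step_comp (n := 227) (p := 2) (q := 3) h227 (by norm_num) (by norm_num) (by norm_num) (by norm_num) (by norm_num)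
  have h229 : psiN 229 ≤ Real.log ((825005310759494289012189328393554022247008970746695943736019934996445219685790014305761100984208000:ℕ):ℝ) := step_prime (n := 228) (V := 825005310759494289012189328393554022247008970746695943736019934996445219685790014305761100984208000) h228 (by norm_num) (by norm_num) (by norm_num)
  have h230 : psiN 230 ≤ Real.log ((825005310759494289012189328393554022247008970746695943736019934996445219685790014305761100984208000:ℕ):ℝ) := step_comp (n := 229) (p := 2) (q := 5) h229 (by norm_num) (by norm_num) (by norm_num) (by norm_num) (by norm_num)
  have h231 : psiN 231 ≤ Real.log ((825005310759494289012189328393554022247008970746695943736019934996445219685790014305761100984208000:ℕ):ℝ) := step_comp (n := 230) (p := 3) (q := 7) h230 (by norm_num) (by norm_num) (by norm_num) (by norm_num) (by norm_num)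
  have h232 : psiN 232 ≤ Real.log ((825005310759494289012189328393554022247008970746695943736019934996445219685790014305761100984208000:ℕ):ℝ) := step_comp (n := 231) (p := 2) (q := 29) h231 (by norm_num) (by norm_num) (by norm_num) (by norm_num) (by norm_num)
  have h233 : psiN 233 ≤ Real.log ((192226237406962169339840113515698087183553090183980154890492644854171736186789073333242336529320464000:ℕ):ℝ) := step_prime (n := 232) (V := 192226237406962169339840113515698087183553090183980154890492644854171736186789073333242336529320464000) h232 (by norm_num) (by norm_num) (by norm_num)
  have h234 : psiN 234 ≤ Real.log ((192226237406962169339840113515698087183553090183980154890492644854171736186789073333242336529320464000:ℕ):ℝ) := step_comp (n := 233) (p := 2) (q := 3) h233 (by norm_num) (by norm_num) (by norm_num) (by norm_num) (by norm_num)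
  have h235 : psiN 235 ≤ Real.log ((192226237406962169339840113515698087183553090183980154890492644854171736186789073333242336529320464000:ℕ):ℝ) := step_comp (n := 234) (p := 5) (q := 47) h234 (by norm_num) (by norm_num) (by norm_num) (by norm_num) (by norm_num)
  have h236 : psiN 236 ≤ Real.log ((192226237406962169339840113515698087183553090183980154890492644854171736186789073333242336529320464000:ℕ):ℝ) := step_comp (n := 235) (p := 2) (q := 59) h235 (by norm_num) (by norm_num) (by norm_num) (by norm_num) (by norm_num)
  have h237 : psiN 237 ≤ Real.log ((192226237406962169339840113515698087183553090183980154890492644854171736186789073333242336529320464000:ℕ):ℝ) := step_comp (n := 236) (p := 3) (q := 79) h236 (by norm_num) (by norm_num) (by norm_num) (by norm_num) (by norm_num)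
  have h238 : psiN 238 ≤ Real.log ((192226237406962169339840113515698087183553090183980154890492644854171736186789073333242336529320464000:ℕ):ℝ) := step_comp (n := 237) (p := 2) (q := 7) h237 (by norm_num) (by norm_num) (by norm_num) (by norm_num) (by norm_num)
  have h239 : psiN 239 ≤ Real.log ((45942070740263958472221787130251842836869188553971257018827742120147044948642588526644918430507590896000:ℕ):ℝ) := step_prime (n := 238) (V := 45942070740263958472221787130251842836869188553971257018827742120147044948642588526644918430507590896000) h238 (by norm_num) (by norm_num) (by norm_num)
  have h240 : psiN 240 ≤ Real.log ((45942070740263958472221787130251842836869188553971257018827742120147044948642588526644918430507590896000:ℕ):ℝ) := step_comp (n := 239) (p := 2) (q := 3) h239 (by norm_num) (by norm_num) (by norm_num) (by norm_num) (by norm_num)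
  have h241 : psiN 241 ≤ Real.log ((11072039048403613991805450698390694123685474441507072941537485850955437832622863834921425341752329405936000:ℕ):ℝ) := step_prime (n := 240) (V := 11072039048403613991805450698390694123685474441507072941537485850955437832622863834921425341752329405936000) h240 (by norm_num) (by norm_num) (by norm_num)
  have h242 : psiN 242 ≤ Real.log ((11072039048403613991805450698390694123685474441507072941537485850955437832622863834921425341752329405936000:ℕ):ℝ) := step_comp (n := 241) (p := 2) (q := 11) h241 (by norm_num) (by norm_num) (by norm_num) (by norm_num) (by norm_num)
  have h243 : psiN 243 ≤ Real.log ((33216117145210841975416352095172082371056423324521218824612457552866313497868591504764276025256988217808000:ℕ):ℝ) := step_pow (n := 242) (p := 3) (k := 5) (V := 33216117145210841975416352095172082371056423324521218824612457552866313497868591504764276025256988217808000) h242 (by norm_num) (by norm_num) (by norm_num) (by norm_num) (by norm_num)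
  have h244 : psiN 244 ≤ Real.log ((33216117145210841975416352095172082371056423324521218824612457552866313497868591504764276025256988217808000:ℕ):ℝ) := step_comp (n := 243) (p := 2) (q := 61) h243 (by norm_num) (by norm_num) (by norm_num) (by norm_num) (by norm_num)
  have h245 : psiN 245 ≤ Real.log ((33216117145210841975416352095172082371056423324521218824612457552866313497868591504764276025256988217808000:ℕ):ℝ) := step_comp (n := 244) (p := 5) (q := 7) h244 (by norm_num) (by norm_num) (by norm_num) (by norm_num) (by norm_num)
  have h246 : psiN 246 ≤ Real.log ((33216117145210841975416352095172082371056423324521218824612457552866313497868591504764276025256988217808000:ℕ):ℝ) := step_comp (n := 245) (p := 2) (q := 3) h245 (by norm_num) (by norm_num) (by norm_num) (by norm_num) (by norm_num)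
  have h247 : psiN 247 ≤ Real.log ((33216117145210841975416352095172082371056423324521218824612457552866313497868591504764276025256988217808000:ℕ):ℝ) := step_comp (n := 246) (p := 13) (q := 19) h246 (by norm_num) (by norm_num) (by norm_num) (by norm_num) (by norm_num)
  have h248 : psiN 248 ≤ Real.log ((33216117145210841975416352095172082371056423324521218824612457552866313497868591504764276025256988217808000:ℕ):ℝ) := step_comp (n := 247) (p := 2) (q := 31) h247 (by norm_num) (by norm_num) (by norm_num) (by norm_num) (by norm_num)
  have h249 : psiN 249 ≤ Real.log ((33216117145210841975416352095172082371056423324521218824612457552866313497868591504764276025256988217808000:ℕ):ℝ) := step_comp (n := 248) (p := 3) (q := 83) h248 (by norm_num) (by norm_num) (by norm_num) (by norm_num) (by norm_num)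
  have h250 : psiN 250 ≤ Real.log ((33216117145210841975416352095172082371056423324521218824612457552866313497868591504764276025256988217808000:ℕ):ℝ) := step_comp (n := 249) (p := 2) (q := 5) h249 (by norm_num) (by norm_num) (by norm_num) (by norm_num) (by norm_num)
  have h251 : psiN 251 ≤ Real.log ((8337245403447921335829504375888192675135162254454825924977726845769444687965016467695833282339504042669808000:ℕ):ℝ) := step_prime (n := 250) (V := 8337245403447921335829504375888192675135162254454825924977726845769444687965016467695833282339504042669808000) h250 (by norm_num) (by norm_num) (by norm_num)
  have h252 : psiN 252 ≤ Real.log ((8337245403447921335829504375888192675135162254454825924977726845769444687965016467695833282339504042669808000:ℕ):ℝ) := step_comp (n := 251) (p := 2) (q := 3) h251 (by norm_num) (by norm_num) (by norm_num) (by norm_num) (by norm_num)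
  have h253 : psiN 253 ≤ Real.log ((8337245403447921335829504375888192675135162254454825924977726845769444687965016467695833282339504042669808000:ℕ):ℝ) := step_comp (n := 252) (p := 11) (q := 23) h252 (by norm_num) (by norm_num) (by norm_num) (by norm_num) (by norm_num)
  have h254 : psiN 254 ≤ Real.log ((8337245403447921335829504375888192675135162254454825924977726845769444687965016467695833282339504042669808000:ℕ):ℝ) := step_comp (n := 253) (p := 2) (q := 127) h253 (by norm_num) (by norm_num) (by norm_num) (by norm_num) (by norm_num)
  have h255 : psiN 255 ≤ Real.log ((8337245403447921335829504375888192675135162254454825924977726845769444687965016467695833282339504042669808000:ℕ):ℝ) := step_comp (n := 254) (p := 3) (q := 5) h254 (by norm_num) (by norm_num) (by norm_num) (by norm_num) (by norm_num)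
  have h256 : psiN 256 ≤ Real.log ((16674490806895842671659008751776385350270324508909651849955453691538889375930032935391666564679008085339616000:ℕ):ℝ) := step_pow (n := 255) (p := 2) (k := 8) (V := 16674490806895842671659008751776385350270324508909651849955453691538889375930032935391666564679008085339616000) h255 (by norm_num) (by norm_num) (by norm_num) (by norm_num) (by norm_num)
  have h257 : psiN 257 ≤ Real.log ((4285344137372231566616365249206531035019473398789780525438551598725494569614018464395658307122505077932281312000:ℕ):ℝ) := step_prime (n := 256) (V := 4285344137372231566616365249206531035019473398789780525438551598725494569614018464395658307122505077932281312000) h256 (by norm_num) (by norm_num) (by norm_num)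
  have h258 : psiN 258 ≤ Real.log ((4285344137372231566616365249206531035019473398789780525438551598725494569614018464395658307122505077932281312000:ℕ):ℝ) := step_comp (n := 257) (p := 2) (q := 3) h257 (by norm_num) (by norm_num) (by norm_num) (by norm_num) (by norm_num)
  have h259 : psiN 259 ≤ Real.log ((4285344137372231566616365249206531035019473398789780525438551598725494569614018464395658307122505077932281312000:ℕ):ℝ) := step_comp (n := 258) (p := 7) (q := 37) h258 (by norm_num) (by norm_num) (by norm_num) (by norm_num) (by norm_num)
  have h260 : psiN 260 ≤ Real.log ((4285344137372231566616365249206531035019473398789780525438551598725494569614018464395658307122505077932281312000:ℕ):ℝ) := step_comp (n := 259) (p := 2) (q := 5) h259 (by norm_num) (by norm_num) (by norm_num) (by norm_num) (by norm_num)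
  have h261 : psiN 261 ≤ Real.log ((4285344137372231566616365249206531035019473398789780525438551598725494569614018464395658307122505077932281312000:ℕ):ℝ) := step_comp (n := 260) (p := 3) (q := 29) h260 (by norm_num) (by norm_num) (by norm_num) (by norm_num) (by norm_num)
  have h262 : psiN 262 ≤ Real.log ((4285344137372231566616365249206531035019473398789780525438551598725494569614018464395658307122505077932281312000:ℕ):ℝ) := step_comp (n := 261) (p := 2) (q := 131) h261 (by norm_num) (by norm_num) (by norm_num) (by norm_num) (by norm_num)
  have h263 : psiN 263 ≤ Real.log ((1127045508128896902020104060541317662210121503881712278190339070464805071808486856136058134773218835496189985056000:ℕ):ℝ) := step_prime (n := 262) (V := 1127045508128896902020104060541317662210121503881712278190339070464805071808486856136058134773218835496189985056000) h262 (by norm_num) (by norm_num) (by norm_num)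
  have h264 : psiN 264 ≤ Real.log ((1127045508128896902020104060541317662210121503881712278190339070464805071808486856136058134773218835496189985056000:ℕ):ℝ) := step_comp (n := 263) (p := 2) (q := 3) h263 (by norm_num) (by norm_num) (by norm_num) (by norm_num) (by norm_num)
  have h265 : psiN 265 ≤ Real.log ((1127045508128896902020104060541317662210121503881712278190339070464805071808486856136058134773218835496189985056000:ℕ):ℝ) := step_comp (n := 264) (p := 5) (q := 53) h264 (by norm_num) (by norm_num) (by norm_num) (by norm_num) (by norm_num)
  have h266 : psiN 266 ≤ Real.log ((1127045508128896902020104060541317662210121503881712278190339070464805071808486856136058134773218835496189985056000:ℕ):ℝ) := step_comp (n := 265) (p := 2) (q := 7) h265 (by norm_num) (by norm_num) (by norm_num) (by norm_num) (by norm_num)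
  have h267 : psiN 267 ≤ Real.log ((1127045508128896902020104060541317662210121503881712278190339070464805071808486856136058134773218835496189985056000:ℕ):ℝ) := step_comp (n := 266) (p := 3) (q := 89) h266 (by norm_num) (by norm_num) (by norm_num) (by norm_num) (by norm_num)
  have h268 : psiN 268 ≤ Real.log ((1127045508128896902020104060541317662210121503881712278190339070464805071808486856136058134773218835496189985056000:ℕ):ℝ) := step_comp (n := 267) (p := 2) (q := 67) h267 (by norm_num) (by norm_num) (by norm_num) (by norm_num) (by norm_num)
  have h269 : psiN 269 ≤ Real.log ((303175241686673266643407992285614451134522684544180602833201209955032564316482964300599638253995866748475105980064000:ℕ):ℝ) := step_prime (n := 268) (V := 303175241686673266643407992285614451134522684544180602833201209955032564316482964300599638253995866748475105980064000) h268 (by norm_num) (by norm_num) (by norm_num)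
  have h270 : psiN 270 ≤ Real.log ((303175241686673266643407992285614451134522684544180602833201209955032564316482964300599638253995866748475105980064000:ℕ):ℝ) := step_comp (n := 269) (p := 2) (q := 3) h269 (by norm_num) (by norm_num) (by norm_num) (by norm_num) (by norm_num)
  have h271 : psiN 271 ≤ Real.log ((82160490497088455260363565909401516257455647511472943367797527897813824929766883325462501966832879888836753720597344000:ℕ):ℝ) := step_prime (n := 270) (V := 82160490497088455260363565909401516257455647511472943367797527897813824929766883325462501966832879888836753720597344000) h270 (by norm_num) (by norm_num) (by norm_num)
  have h272 : psiN 272 ≤ Real.log ((82160490497088455260363565909401516257455647511472943367797527897813824929766883325462501966832879888836753720597344000:ℕ):ℝ) := step_comp (n := 271) (p := 2) (q := 17) h271 (by norm_num) (by norm_num) (by norm_num) (by norm_num) (by norm_num)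
  have h273 : psiN 273 ≤ Real.log ((82160490497088455260363565909401516257455647511472943367797527897813824929766883325462501966832879888836753720597344000:ℕ):ℝ) := step_comp (n := 272) (p := 3) (q := 7) h272 (by norm_num) (by norm_num) (by norm_num) (by norm_num) (by norm_num)
  have h274 : psiN 274 ≤ Real.log ((82160490497088455260363565909401516257455647511472943367797527897813824929766883325462501966832879888836753720597344000:ℕ):ℝ) := step_comp (n := 273) (p := 2) (q := 137) h273 (by norm_num) (by norm_num) (by norm_num) (by norm_num) (by norm_num)
  have h275 : psiN 275 ≤ Real.log ((82160490497088455260363565909401516257455647511472943367797527897813824929766883325462501966832879888836753720597344000:ℕ):ℝ) := step_comp (n := 274) (p := 5) (q := 11) h274 (by norm_num) (by norm_num) (by norm_num) (by norm_num) (by norm_num)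
  have h276 : psiN 276 ≤ Real.log ((82160490497088455260363565909401516257455647511472943367797527897813824929766883325462501966832879888836753720597344000:ℕ):ℝ) := step_comp (n := 275) (p := 2) (q := 3) h275 (by norm_num) (by norm_num) (by norm_num) (by norm_num) (by norm_num)
  have h277 : psiN 277 ≤ Real.log ((22758455867693502107120707756904220003315214360678005312879915227694429505545426681153113044812707729207780780605464288000:ℕ):ℝ) := step_prime (n := 276) (V := 22758455867693502107120707756904220003315214360678005312879915227694429505545426681153113044812707729207780780605464288000) h276 (by norm_num) (by norm_num) (by norm_num)
  have h278 : psiN 278 ≤ Real.log ((22758455867693502107120707756904220003315214360678005312879915227694429505545426681153113044812707729207780780605464288000:ℕ):ℝ) := step_comp (n := 277) (p := 2) (q := 139) h277 (by norm_num) (by norm_num) (by norm_num) (by norm_num) (by norm_num)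
  have h279 : psiN 279 ≤ Real.log ((22758455867693502107120707756904220003315214360678005312879915227694429505545426681153113044812707729207780780605464288000:ℕ):ℝ) := step_comp (n := 278) (p := 3) (q := 31) h278 (by norm_num) (by norm_num) (by norm_num) (by norm_num) (by norm_num)
  have h280 : psiN 280 ≤ Real.log ((22758455867693502107120707756904220003315214360678005312879915227694429505545426681153113044812707729207780780605464288000:ℕ):ℝ) := step_comp (n := 279) (p := 2) (q := 5) h279 (by norm_num) (by norm_num) (by norm_num) (by norm_num) (by norm_num)
  have h281 : psiN 281 ≤ Real.log ((6395126098821874092100918879690085820931575235350519492919256178982134691058264897404024765592370871907386399350135464928000:ℕ):ℝ) := step_prime (n := 280) (V := 6395126098821874092100918879690085820931575235350519492919256178982134691058264897404024765592370871907386399350135464928000) h280 (by norm_num) (by norm_num) (by norm_num)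
  have h282 : psiN 282 ≤ Real.log ((6395126098821874092100918879690085820931575235350519492919256178982134691058264897404024765592370871907386399350135464928000:ℕ):ℝ) := step_comp (n := 281) (p := 2) (q := 3) h281 (by norm_num) (by norm_num) (by norm_num) (by norm_num) (by norm_num)
  have h283 : psiN 283 ≤ Real.log ((1809820685966590368064560042952294287323635791604197016496149498651944117569488965965339008662640956749790351016088336574624000:ℕ):ℝ) := step_prime (n := 282) (V := 1809820685966590368064560042952294287323635791604197016496149498651944117569488965965339008662640956749790351016088336574624000) h282 (by norm_num) (by norm_num) (by norm_num)
  have h284 : psiN 284 ≤ Real.log ((1809820685966590368064560042952294287323635791604197016496149498651944117569488965965339008662640956749790351016088336574624000:ℕ):ℝ) := step_comp (n := 283) (p := 2) (q := 71) h283 (by norm_num) (by norm_num) (by norm_num) (by norm_num) (by norm_num)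
  have h285 : psiN 285 ≤ Real.log ((1809820685966590368064560042952294287323635791604197016496149498651944117569488965965339008662640956749790351016088336574624000:ℕ):ℝ) := step_comp (n := 284) (p := 3) (q := 5) h284 (by norm_num) (by norm_num) (by norm_num) (by norm_num) (by norm_num)
  have h286 : psiN 286 ≤ Real.log ((1809820685966590368064560042952294287323635791604197016496149498651944117569488965965339008662640956749790351016088336574624000:ℕ):ℝ) := step_comp (n := 285) (p := 2) (q := 11) h285 (by norm_num) (by norm_num) (by norm_num) (by norm_num) (by norm_num)
  have h287 : psiN 287 ≤ Real.log ((1809820685966590368064560042952294287323635791604197016496149498651944117569488965965339008662640956749790351016088336574624000:ℕ):ℝ) := step_comp (n := 286) (p := 7) (q := 41) h286 (by norm_num) (by norm_num) (by norm_num) (by norm_num) (by norm_num)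
  have h288 : psiN 288 ≤ Real.log ((1809820685966590368064560042952294287323635791604197016496149498651944117569488965965339008662640956749790351016088336574624000:ℕ):ℝ) := step_comp (n := 287) (p := 2) (q := 3) h287 (by norm_num) (by norm_num) (by norm_num) (by norm_num) (by norm_num)
  have h289 : psiN 289 ≤ Real.log ((30766951661432036257097520730189002884501808457271349280434541477083049998681312421410763147264896264746435967273501721768608000:ℕ):ℝ) := step_pow (n := 288) (p := 17) (k := 2) (V := 30766951661432036257097520730189002884501808457271349280434541477083049998681312421410763147264896264746435967273501721768608000) h288 (by norm_num) (by norm_num) (by norm_num) (by norm_num) (by norm_num)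
  have h290 : psiN 290 ≤ Real.log ((30766951661432036257097520730189002884501808457271349280434541477083049998681312421410763147264896264746435967273501721768608000:ℕ):ℝ) := step_comp (n := 289) (p := 2) (q := 5) h289 (by norm_num) (by norm_num) (by norm_num) (by norm_num) (by norm_num)
  have h291 : psiN 291 ≤ Real.log ((30766951661432036257097520730189002884501808457271349280434541477083049998681312421410763147264896264746435967273501721768608000:ℕ):ℝ) := step_comp (n := 290) (p := 3) (q := 97) h290 (by norm_num) (by norm_num) (by norm_num) (by norm_num) (by norm_num)
  have h292 : psiN 292 ≤ Real.log ((30766951661432036257097520730189002884501808457271349280434541477083049998681312421410763147264896264746435967273501721768608000:ℕ):ℝ) := step_comp (n := 291) (p := 2) (q := 73) h291 (by norm_num) (by norm_num) (by norm_num) (by norm_num) (by norm_num)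
  have h293 : psiN 293 ≤ Real.log ((9014716836799586623329573573945377845159029877980505339167320652785333649613624539473353602148614605570705738411136004478202144000:ℕ):ℝ) := step_prime (n := 292) (V := 9014716836799586623329573573945377845159029877980505339167320652785333649613624539473353602148614605570705738411136004478202144000) h292 (by norm_num) (by norm_num) (by norm_num)
  have h294 : psiN 294 ≤ Real.log ((9014716836799586623329573573945377845159029877980505339167320652785333649613624539473353602148614605570705738411136004478202144000:ℕ):ℝ) := step_comp (n := 293) (p := 2) (q := 3) h293 (by norm_num) (by norm_num) (by norm_num) (by norm_num) (by norm_num)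
  have h295 : psiN 295 ≤ Real.log ((9014716836799586623329573573945377845159029877980505339167320652785333649613624539473353602148614605570705738411136004478202144000:ℕ):ℝ) := step_comp (n := 294) (p := 5) (q := 59) h294 (by norm_num) (by norm_num) (by norm_num) (by norm_num) (by norm_num)
  have h296 : psiN 296 ≤ Real.log ((9014716836799586623329573573945377845159029877980505339167320652785333649613624539473353602148614605570705738411136004478202144000:ℕ):ℝ) := step_comp (n := 295) (p := 2) (q := 37) h295 (by norm_num) (by norm_num) (by norm_num) (by norm_num) (by norm_num)
  have h297 : psiN 297 ≤ Real.log ((9014716836799586623329573573945377845159029877980505339167320652785333649613624539473353602148614605570705738411136004478202144000:ℕ):ℝ) := step_comp (n := 296) (p := 3) (q := 11) h296 (by norm_num) (by norm_num) (by norm_num) (by norm_num) (by norm_num)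
  have h298 : psiN 298 ≤ Real.log ((9014716836799586623329573573945377845159029877980505339167320652785333649613624539473353602148614605570705738411136004478202144000:ℕ):ℝ) := step_comp (n := 297) (p := 2) (q := 149) h297 (by norm_num) (by norm_num) (by norm_num) (by norm_num) (by norm_num)
  have h299 : psiN 299 ≤ Real.log ((9014716836799586623329573573945377845159029877980505339167320652785333649613624539473353602148614605570705738411136004478202144000:ℕ):ℝ) := step_comp (n := 298) (p := 13) (q := 23) h298 (by norm_num) (by norm_num) (by norm_num) (by norm_num) (by norm_num)
  have h300 : psiN 300 ≤ Real.log ((9014716836799586623329573573945377845159029877980505339167320652785333649613624539473353602148614605570705738411136004478202144000:ℕ):ℝ) := step_comp (n := 299) (p := 2) (q := 3) h299 (by norm_num) (by norm_num) (by norm_num) (by norm_num) (by norm_num)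
  have h301 : psiN 301 ≤ Real.log ((9014716836799586623329573573945377845159029877980505339167320652785333649613624539473353602148614605570705738411136004478202144000:ℕ):ℝ) := step_comp (n := 300) (p := 7) (q := 43) h300 (by norm_num) (by norm_num) (by norm_num) (by norm_num) (by norm_num)
  have h302 : psiN 302 ≤ Real.log ((9014716836799586623329573573945377845159029877980505339167320652785333649613624539473353602148614605570705738411136004478202144000:ℕ):ℝ) := step_comp (n := 301) (p := 2) (q := 151) h301 (by norm_num) (by norm_num) (by norm_num) (by norm_num) (by norm_num)
  have h303 : psiN 303 ≤ Real.log ((9014716836799586623329573573945377845159029877980505339167320652785333649613624539473353602148614605570705738411136004478202144000:ℕ):ℝ) := step_comp (n := 302) (p := 3) (q := 101) h302 (by norm_num) (by norm_num) (by norm_num) (by norm_num) (by norm_num)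
  have h304 : psiN 304 ≤ Real.log ((9014716836799586623329573573945377845159029877980505339167320652785333649613624539473353602148614605570705738411136004478202144000:ℕ):ℝ) := step_comp (n := 303) (p := 2) (q := 19) h303 (by norm_num) (by norm_num) (by norm_num) (by norm_num) (by norm_num)
  have h305 : psiN 305 ≤ Real.log ((9014716836799586623329573573945377845159029877980505339167320652785333649613624539473353602148614605570705738411136004478202144000:ℕ):ℝ) := step_comp (n := 304) (p := 5) (q := 61) h304 (by norm_num) (by norm_num) (by norm_num) (by norm_num) (by norm_num)
  have h306 : psiN 306 ≤ Real.log ((9014716836799586623329573573945377845159029877980505339167320652785333649613624539473353602148614605570705738411136004478202144000:ℕ):ℝ) := step_comp (n := 305) (p := 2) (q := 3) h305 (by norm_num) (by norm_num) (by norm_num) (by norm_num) (by norm_num)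
  have h307 : psiN 307 ≤ Real.log ((2767518068897473093362179087201230998463822172540015139124367440405097430431382733618319555859624683910206661692218753374808058208000:ℕ):ℝ) := step_prime (n := 306) (V := 2767518068897473093362179087201230998463822172540015139124367440405097430431382733618319555859624683910206661692218753374808058208000) h306 (by norm_num) (by norm_num) (by norm_num)
  have h308 : psiN 308 ≤ Real.log ((2767518068897473093362179087201230998463822172540015139124367440405097430431382733618319555859624683910206661692218753374808058208000:ℕ):ℝ) := step_comp (n := 307) (p := 2) (q := 7) h307 (by norm_num) (by norm_num) (by norm_num) (by norm_num) (by norm_num)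
  have h309 : psiN 309 ≤ Real.log ((2767518068897473093362179087201230998463822172540015139124367440405097430431382733618319555859624683910206661692218753374808058208000:ℕ):ℝ) := step_comp (n := 308) (p := 3) (q := 103) h308 (by norm_num) (by norm_num) (by norm_num) (by norm_num) (by norm_num)
  have h310 : psiN 310 ≤ Real.log ((2767518068897473093362179087201230998463822172540015139124367440405097430431382733618319555859624683910206661692218753374808058208000:ℕ):ℝ) := step_comp (n := 309) (p := 2) (q := 5) h309 (by norm_num) (by norm_num) (by norm_num) (by norm_num) (by norm_num)
  have h311 : psiN 311 ≤ Real.log ((860698119427114132035637696119582840522248695659944708267678273965985300864160030155297381872343276696074271786280032299565306102688000:ℕ):ℝ) := step_prime (n := 310) (V := 860698119427114132035637696119582840522248695659944708267678273965985300864160030155297381872343276696074271786280032299565306102688000) h310 (by norm_num) (by norm_num) (by norm_num)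
  have h312 : psiN 312 ≤ Real.log ((860698119427114132035637696119582840522248695659944708267678273965985300864160030155297381872343276696074271786280032299565306102688000:ℕ):ℝ) := step_comp (n := 311) (p := 2) (q := 3) h311 (by norm_num) (by norm_num) (by norm_num) (by norm_num) (by norm_num)
  have h313 : psiN 313 ≤ Real.log ((269398511380686723327154598885429429083463841741562693687783299751353399170482089438608080526043445605871247069105650109763940810141344000:ℕ):ℝ) := step_prime (n := 312) (V := 269398511380686723327154598885429429083463841741562693687783299751353399170482089438608080526043445605871247069105650109763940810141344000) h312 (by norm_num) (by norm_num) (by norm_num)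
  have h314 : psiN 314 ≤ Real.log ((269398511380686723327154598885429429083463841741562693687783299751353399170482089438608080526043445605871247069105650109763940810141344000:ℕ):ℝ) := step_comp (n := 313) (p := 2) (q := 157) h313 (by norm_num) (by norm_num) (by norm_num) (by norm_num) (by norm_num)
  have h315 : psiN 315 ≤ Real.log ((269398511380686723327154598885429429083463841741562693687783299751353399170482089438608080526043445605871247069105650109763940810141344000:ℕ):ℝ) := step_comp (n := 314) (p := 3) (q := 5) h314 (by norm_num) (by norm_num) (by norm_num) (by norm_num) (by norm_num)
  have h316 : psiN 316 ≤ Real.log ((269398511380686723327154598885429429083463841741562693687783299751353399170482089438608080526043445605871247069105650109763940810141344000:ℕ):ℝ) := step_comp (n := 315) (p := 2) (q := 79) h315 (by norm_num) (by norm_num) (by norm_num) (by norm_num) (by norm_num)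
  have h317 : psiN 317 ≤ Real.log ((85399328107677691294708007846681129019458037832075373899027306021179027537042822352038761526755772257061185320906491084795169236814806048000:ℕ):ℝ) := step_prime (n := 316) (V := 85399328107677691294708007846681129019458037832075373899027306021179027537042822352038761526755772257061185320906491084795169236814806048000) h316 (by norm_num) (by norm_num) (by norm_num)
  have h318 : psiN 318 ≤ Real.log ((85399328107677691294708007846681129019458037832075373899027306021179027537042822352038761526755772257061185320906491084795169236814806048000:ℕ):ℝ) := step_comp (n := 317) (p := 2) (q := 3) h317 (by norm_num) (by norm_num) (by norm_num) (by norm_num) (by norm_num)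
  have h319 : psiN 319 ≤ Real.log ((85399328107677691294708007846681129019458037832075373899027306021179027537042822352038761526755772257061185320906491084795169236814806048000:ℕ):ℝ) := step_comp (n := 318) (p := 11) (q := 29) h318 (by norm_num) (by norm_num) (by norm_num) (by norm_num) (by norm_num)
  have h320 : psiN 320 ≤ Real.log ((85399328107677691294708007846681129019458037832075373899027306021179027537042822352038761526755772257061185320906491084795169236814806048000:ℕ):ℝ) := step_comp (n := 319) (p := 2) (q := 5) h319 (by norm_num) (by norm_num) (by norm_num) (by norm_num) (by norm_num)
  have h321 : psiN 321 ≤ Real.log ((85399328107677691294708007846681129019458037832075373899027306021179027537042822352038761526755772257061185320906491084795169236814806048000:ℕ):ℝ) := step_comp (n := 320) (p := 3) (q := 107) h320 (by norm_num) (by norm_num) (by norm_num) (by norm_num) (by norm_num)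
  have h322 : psiN 322 ≤ Real.log ((85399328107677691294708007846681129019458037832075373899027306021179027537042822352038761526755772257061185320906491084795169236814806048000:ℕ):ℝ) := step_comp (n := 321) (p := 2) (q := 7) h321 (by norm_num) (by norm_num) (by norm_num) (by norm_num) (by norm_num)
  have h323 : psiN 323 ≤ Real.log ((85399328107677691294708007846681129019458037832075373899027306021179027537042822352038761526755772257061185320906491084795169236814806048000:ℕ):ℝ) := step_comp (n := 322) (p := 17) (q := 19) h322 (by norm_num) (by norm_num) (by norm_num) (by norm_num) (by norm_num)
  have h324 : psiN 324 ≤ Real.log ((85399328107677691294708007846681129019458037832075373899027306021179027537042822352038761526755772257061185320906491084795169236814806048000:ℕ):ℝ) := step_comp (n := 323) (p := 2) (q := 3) h323 (by norm_num) (by norm_num) (by norm_num) (by norm_num) (by norm_num)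
  have h325 : psiN 325 ≤ Real.log ((85399328107677691294708007846681129019458037832075373899027306021179027537042822352038761526755772257061185320906491084795169236814806048000:ℕ):ℝ) := step_comp (n := 324) (p := 5) (q := 13) h324 (by norm_num) (by norm_num) (by norm_num) (by norm_num) (by norm_num)
  have h326 : psiN 326 ≤ Real.log ((85399328107677691294708007846681129019458037832075373899027306021179027537042822352038761526755772257061185320906491084795169236814806048000:ℕ):ℝ) := step_comp (n := 325) (p := 2) (q := 163) h325 (by norm_num) (by norm_num) (by norm_num) (by norm_num) (by norm_num)
  have h327 : psiN 327 ≤ Real.log ((85399328107677691294708007846681129019458037832075373899027306021179027537042822352038761526755772257061185320906491084795169236814806048000:ℕ):ℝ) := step_comp (n := 326) (p := 3) (q := 109) h326 (by norm_num) (by norm_num) (by norm_num) (by norm_num) (by norm_num)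
  have h328 : psiN 328 ≤ Real.log ((85399328107677691294708007846681129019458037832075373899027306021179027537042822352038761526755772257061185320906491084795169236814806048000:ℕ):ℝ) := step_comp (n := 327) (p := 2) (q := 41) h327 (by norm_num) (by norm_num) (by norm_num) (by norm_num) (by norm_num)
  have h329 : psiN 329 ≤ Real.log ((85399328107677691294708007846681129019458037832075373899027306021179027537042822352038761526755772257061185320906491084795169236814806048000:ℕ):ℝ) := step_comp (n := 328) (p := 7) (q := 47) h328 (by norm_num) (by norm_num) (by norm_num) (by norm_num) (by norm_num)
  have h330 : psiN 330 ≤ Real.log ((85399328107677691294708007846681129019458037832075373899027306021179027537042822352038761526755772257061185320906491084795169236814806048000:ℕ):ℝ) := step_comp (n := 329) (p := 2) (q := 3) h329 (by norm_num) (by norm_num) (by norm_num) (by norm_num) (by norm_num)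
  have h331 : psiN 331 ≤ Real.log ((28267177603641315818548350597251453705440610522416948760578038293010258114761174198524830065356160617087252341220048549067201017385700801888000:ℕ):ℝ) := step_prime (n := 330) (V := 28267177603641315818548350597251453705440610522416948760578038293010258114761174198524830065356160617087252341220048549067201017385700801888000) h330 (by norm_num) (by norm_num) (by norm_num)
  have h332 : psiN 332 ≤ Real.log ((28267177603641315818548350597251453705440610522416948760578038293010258114761174198524830065356160617087252341220048549067201017385700801888000:ℕ):ℝ) := step_comp (n := 331) (p := 2) (q := 83) h331 (by norm_num) (by norm_num) (by norm_num) (by norm_num) (by norm_num)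
  have h333 : psiN 333 ≤ Real.log ((28267177603641315818548350597251453705440610522416948760578038293010258114761174198524830065356160617087252341220048549067201017385700801888000:ℕ):ℝ) := step_comp (n := 332) (p := 3) (q := 37) h332 (by norm_num) (by norm_num) (by norm_num) (by norm_num) (by norm_num)
  have h334 : psiN 334 ≤ Real.log ((28267177603641315818548350597251453705440610522416948760578038293010258114761174198524830065356160617087252341220048549067201017385700801888000:ℕ):ℝ) := step_comp (n := 333) (p := 2) (q := 167) h333 (by norm_num) (by norm_num) (by norm_num) (by norm_num) (by norm_num)
  have h335 : psiN 335 ≤ Real.log ((28267177603641315818548350597251453705440610522416948760578038293010258114761174198524830065356160617087252341220048549067201017385700801888000:ℕ):ℝ) := step_comp (n := 334) (p := 5) (q := 67) h334 (by norm_num) (by norm_num) (by norm_num) (by norm_num) (by norm_num)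
  have h336 : psiN 336 ≤ Real.log ((28267177603641315818548350597251453705440610522416948760578038293010258114761174198524830065356160617087252341220048549067201017385700801888000:ℕ):ℝ) := step_comp (n := 335) (p := 2) (q := 3) h335 (by norm_num) (by norm_num) (by norm_num) (by norm_num) (by norm_num)
  have h337 : psiN 337 ≤ Real.log ((9526038852427123430850794151273739898733485746054511732314798904744456984674515704902867732025026127958404038991156361035646742858981170236256000:ℕ):ℝ) := step_prime (n := 336) (V := 9526038852427123430850794151273739898733485746054511732314798904744456984674515704902867732025026127958404038991156361035646742858981170236256000) h336 (by norm_num) (by norm_num) (by norm_num)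
  have h338 : psiN 338 ≤ Real.log ((9526038852427123430850794151273739898733485746054511732314798904744456984674515704902867732025026127958404038991156361035646742858981170236256000:ℕ):ℝ) := step_comp (n := 337) (p := 2) (q := 13) h337 (by norm_num) (by norm_num) (by norm_num) (by norm_num) (by norm_num)
  have h339 : psiN 339 ≤ Real.log ((9526038852427123430850794151273739898733485746054511732314798904744456984674515704902867732025026127958404038991156361035646742858981170236256000:ℕ):ℝ) := step_comp (n := 338) (p := 3) (q := 113) h338 (by norm_num) (by norm_num) (by norm_num) (by norm_num) (by norm_num)
  have h340 : psiN 340 ≤ Real.log ((9526038852427123430850794151273739898733485746054511732314798904744456984674515704902867732025026127958404038991156361035646742858981170236256000:ℕ):ℝ) := step_comp (n := 339) (p := 2) (q := 5) h339 (by norm_num) (by norm_num) (by norm_num) (by norm_num) (by norm_num)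
  have h341 : psiN 341 ≤ Real.log ((9526038852427123430850794151273739898733485746054511732314798904744456984674515704902867732025026127958404038991156361035646742858981170236256000:ℕ):ℝ) := step_comp (n := 340) (p := 11) (q := 31) h340 (by norm_num) (by norm_num) (by norm_num) (by norm_num) (by norm_num)
  have h342 : psiN 342 ≤ Real.log ((9526038852427123430850794151273739898733485746054511732314798904744456984674515704902867732025026127958404038991156361035646742858981170236256000:ℕ):ℝ) := step_comp (n := 341) (p := 2) (q := 3) h341 (by norm_num) (by norm_num) (by norm_num) (by norm_num) (by norm_num)
  have h343 : psiN 343 ≤ Real.log ((66682271966989864015955559058916179291134400222381582126203592333211198892721609934320074124175182895708828272938094527249527200012868191653792000:ℕ):ℝ) := step_pow (n := 342) (p := 7) (k := 3) (V := 66682271966989864015955559058916179291134400222381582126203592333211198892721609934320074124175182895708828272938094527249527200012868191653792000) h342 (by norm_num) (by norm_num) (by norm_num) (by norm_num) (by norm_num)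
  have h344 : psiN 344 ≤ Real.log ((66682271966989864015955559058916179291134400222381582126203592333211198892721609934320074124175182895708828272938094527249527200012868191653792000:ℕ):ℝ) := step_comp (n := 343) (p := 2) (q := 43) h343 (by norm_num) (by norm_num) (by norm_num) (by norm_num) (by norm_num)
  have h345 : psiN 345 ≤ Real.log ((66682271966989864015955559058916179291134400222381582126203592333211198892721609934320074124175182895708828272938094527249527200012868191653792000:ℕ):ℝ) := step_comp (n := 344) (p := 3) (q := 5) h344 (by norm_num) (by norm_num) (by norm_num) (by norm_num) (by norm_num)
  have h346 : psiN 346 ≤ Real.log ((66682271966989864015955559058916179291134400222381582126203592333211198892721609934320074124175182895708828272938094527249527200012868191653792000:ℕ):ℝ) := step_comp (n := 345) (p := 2) (q := 173) h345 (by norm_num) (by norm_num) (by norm_num) (by norm_num) (by norm_num)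
  have h347 : psiN 347 ≤ Real.log ((23138748372545482813536578993443914214023636877166408997792646539624286015774398647209065721088788464810963410709518800955585938404465262503865824000:ℕ):ℝ) := step_prime (n := 346) (V := 23138748372545482813536578993443914214023636877166408997792646539624286015774398647209065721088788464810963410709518800955585938404465262503865824000) h346 (by norm_num) (by norm_num) (by norm_num)
  have h348 : psiN 348 ≤ Real.log ((23138748372545482813536578993443914214023636877166408997792646539624286015774398647209065721088788464810963410709518800955585938404465262503865824000:ℕ):ℝ) := step_comp (n := 347) (p := 2) (q := 3) h347 (by norm_num) (by norm_num) (by norm_num) (by norm_num) (by norm_num)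
  have h349 : psiN 349 ≤ Real.log ((8075423182018373501924266068711926060694249270131076740229633642328875819505265127875963936659987174219026230337622061533499492503158376613849172576000:ℕ):ℝ) := step_prime (n := 348) (V := 8075423182018373501924266068711926060694249270131076740229633642328875819505265127875963936659987174219026230337622061533499492503158376613849172576000) h348 (by norm_num) (by norm_num) (by norm_num)
  have h350 : psiN 350 ≤ Real.log ((8075423182018373501924266068711926060694249270131076740229633642328875819505265127875963936659987174219026230337622061533499492503158376613849172576000:ℕ):ℝ) := step_comp (n := 349) (p := 2) (q := 5) h349 (by norm_num) (by norm_num) (by norm_num) (by norm_num) (by norm_num)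
  have h351 : psiN 351 ≤ Real.log ((8075423182018373501924266068711926060694249270131076740229633642328875819505265127875963936659987174219026230337622061533499492503158376613849172576000:ℕ):ℝ) := step_comp (n := 350) (p := 3) (q := 13) h350 (by norm_num) (by norm_num) (by norm_num) (by norm_num) (by norm_num)
  have h352 : psiN 352 ≤ Real.log ((8075423182018373501924266068711926060694249270131076740229633642328875819505265127875963936659987174219026230337622061533499492503158376613849172576000:ℕ):ℝ) := step_comp (n := 351) (p := 2) (q := 11) h351 (by norm_num) (by norm_num) (by norm_num) (by norm_num) (by norm_num)
  have h353 : psiN 353 ≤ Real.log ((2850624383252485846179265922255309899425069992356270089301060675742093164285358590140215269640975472499316259309180587721325320853614906944688757919328000:ℕ):ℝ) := step_prime (n := 352) (V := 2850624383252485846179265922255309899425069992356270089301060675742093164285358590140215269640975472499316259309180587721325320853614906944688757919328000) h352 (by norm_num) (by norm_num) (by norm_num)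
  have h354 : psiN 354 ≤ Real.log ((2850624383252485846179265922255309899425069992356270089301060675742093164285358590140215269640975472499316259309180587721325320853614906944688757919328000:ℕ):ℝ) := step_comp (n := 353) (p := 2) (q := 3) h353 (by norm_num) (by norm_num) (by norm_num) (by norm_num) (by norm_num)
  have h355 : psiN 355 ≤ Real.log ((2850624383252485846179265922255309899425069992356270089301060675742093164285358590140215269640975472499316259309180587721325320853614906944688757919328000:ℕ):ℝ) := step_comp (n := 354) (p := 5) (q := 71) h354 (by norm_num) (by norm_num) (by norm_num) (by norm_num) (by norm_num)
  have h356 : psiN 356 ≤ Real.log ((2850624383252485846179265922255309899425069992356270089301060675742093164285358590140215269640975472499316259309180587721325320853614906944688757919328000:ℕ):ℝ) := step_comp (n := 355) (p := 2) (q := 89) h355 (by norm_num) (by norm_num) (by norm_num) (by norm_num) (by norm_num)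
  have h357 : psiN 357 ≤ Real.log ((2850624383252485846179265922255309899425069992356270089301060675742093164285358590140215269640975472499316259309180587721325320853614906944688757919328000:ℕ):ℝ) := step_comp (n := 356) (p := 3) (q := 7) h356 (by norm_num) (by norm_num) (by norm_num) (by norm_num) (by norm_num)
  have h358 : psiN 358 ≤ Real.log ((2850624383252485846179265922255309899425069992356270089301060675742093164285358590140215269640975472499316259309180587721325320853614906944688757919328000:ℕ):ℝ) := step_comp (n := 357) (p := 2) (q := 179) h357 (by norm_num) (by norm_num) (by norm_num) (by norm_num) (by norm_num)
  have c3 : Real.log ((6:ℕ):ℝ) ≤ (252:ℝ)/100 := by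
    have := log_nat_le 6 252 100 (by norm_num) (by decide +kernel)
    norm_num at this ⊢
    linarith
  have c6 : Real.log ((60:ℕ):ℝ) ≤ (504:ℝ)/100 := by
    have := log_nat_le 60 504 100 (by norm_num) (by decide +kernel)
    norm_num at this ⊢
    linarith
  have c10 : Real.log ((2520:ℕ):ℝ) ≤ (882:ℝ)/100 := by
    have := log_nat_le 2520 882 100 (by norm_num) (by decide +kernel)
    norm_num at this ⊢
    linarith
  have c16 : Real.log ((720720:ℕ):ℝ) ≤ (1386:ℝ)/100 := by
    have := log_nat_le 720720 1386 100 (by norm_num) (by decide +kernel)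
    norm_num at this ⊢
    linarith
  have c22 : Real.log ((232792560:ℕ):ℝ) ≤ (2142:ℝ)/100 := by
    have := log_nat_le 232792560 2142 100 (by norm_num) (by decide +kernel)
    norm_num at this ⊢
    linarith
  have c30 : Real.log ((2329089562800:ℕ):ℝ) ≤ (2898:ℝ)/100 := by
    have := log_nat_le 2329089562800 2898 100 (by norm_num) (by decide +kernel)
    norm_num at this ⊢
    linarith
  have c40 : Real.log ((5342931457063200:ℕ):ℝ) ≤ (3906:ℝ)/100 := by
    have := log_nat_le 5342931457063200 3906 100 (by norm_num) (by decide +kernel)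
    norm_num at this ⊢
    linarith
  have c52 : Real.log ((3099044504245996706400:ℕ):ℝ) ≤ (5166:ℝ)/100 := by
    have := log_nat_le 3099044504245996706400 5166 100 (by norm_num) (by decide +kernel)
    norm_num at this ⊢
    linarith
  have c70 : Real.log ((79211881234889091923261227200:ℕ):ℝ) ≤ (6678:ℝ)/100 := by
    have := log_nat_le 79211881234889091923261227200 6678 100 (by norm_num) (by decide +kernel)
    norm_num at this ⊢
    linarith
  have c88 : Real.log ((8076030954443701744994070304101969600:ℕ):ℝ) ≤ (8946:ℝ)/100 := by
    have := log_nat_le 8076030954443701744994070304101969600 8946 100 (by norm_num) (by decide +kernel)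
    norm_num at this ⊢
    linarith
  have c108 : Real.log ((77607213796072782293863037935883766647448772800:ℕ):ℝ) ≤ (11214:ℝ)/100 := by
    have := log_nat_le 77607213796072782293863037935883766647448772800 11214 100 (by norm_num) (by decide +kernel)
    norm_num at this ⊢
    linarith
  have c138 : Real.log ((239659860565130545615559086972088925228945148132416695184000:ℕ):ℝ) ≤ (13734:ℝ)/100 := by
    have := log_nat_le 239659860565130545615559086972088925228945148132416695184000 13734 100 (by norm_num) (by decide +kernel)
    norm_num at this ⊢
    linarith
  have c178 : Real.log ((7203880527456061926730046032397876988312400372513092634469173493103827472000:ℕ):ℝ) ≤ (17514:ℝ)/100 := by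
    have := log_nat_le 7203880527456061926730046032397876988312400372513092634469173493103827472000 17514 100 (by norm_num) (by decide +kernel)
    norm_num at this ⊢
    linarith
  have c228 : Real.log ((3602643278425739253328337678574471712869034806754130758672576135355655981160655084304633628752000:ℕ):ℝ) ≤ (22554:ℝ)/100 := by
    have := log_nat_le 3602643278425739253328337678574471712869034806754130758672576135355655981160655084304633628752000 22554 100 (by norm_num) (by decide +kernel)
    norm_num at this ⊢
    linarith
  have c282 : Real.log ((6395126098821874092100918879690085820931575235350519492919256178982134691058264897404024765592370871907386399350135464928000:ℕ):ℝ) ≤ (28854:ℝ)/100 := by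
    have := log_nat_le 6395126098821874092100918879690085820931575235350519492919256178982134691058264897404024765592370871907386399350135464928000 28854 100 (by norm_num) (by decide +kernel)
    norm_num at this ⊢
    linarith
  have c358 : Real.log ((2850624383252485846179265922255309899425069992356270089301060675742093164285358590140215269640975472499316259309180587721325320853614906944688757919328000:ℕ):ℝ) ≤ (35658:ℝ)/100 := by
    have := log_nat_le 2850624383252485846179265922255309899425069992356270089301060675742093164285358590140215269640975472499316259309180587721325320853614906944688757919328000 35658 100 (by norm_num) (by decide +kernel)
    norm_num at this ⊢
    linarith
  by_cases b1 : M ≤ 1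
  · have : psiN M ≤ psiN 1 := psiN_mono b1
    rw [psiN_one] at this
    have hM0 : (0:ℝ) ≤ (M:ℝ) := by positivity
    linarith
  by_cases b3 : M ≤ 3
  · have hmono : psiN M ≤ psiN 3 := psiN_mono b3
    have hlo : (2:ℝ) ≤ (M:ℝ) := by exact_mod_cast (by omega : 2 ≤ M)
    have := h3.trans c3
    linarith
  by_cases b6 : M ≤ 6
  · have hmono : psiN M ≤ psiN 6 := psiN_mono b6
    have hlo : (4:ℝ) ≤ (M:ℝ) := by exact_mod_cast (by omega : 4 ≤ M)
    have := h6.trans c6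
    linarith
  by_cases b10 : M ≤ 10
  · have hmono : psiN M ≤ psiN 10 := psiN_mono b10
    have hlo : (7:ℝ) ≤ (M:ℝ) := by exact_mod_cast (by omega : 7 ≤ M)
    have := h10.trans c10
    linarith
  by_cases b16 : M ≤ 16
  · have hmono : psiN M ≤ psiN 16 := psiN_mono b16
    have hlo : (11:ℝ) ≤ (M:ℝ) := by exact_mod_cast (by omega : 11 ≤ M)
    have := h16.trans c16
    linarith
  by_cases b22 : M ≤ 22
  · have hmono : psiN M ≤ psiN 22 := psiN_mono b22
    have hlo : (17:ℝ) ≤ (M:ℝ) := by exact_mod_cast (by omega : 17 ≤ M)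
    have := h22.trans c22
    linarith
  by_cases b30 : M ≤ 30
  · have hmono : psiN M ≤ psiN 30 := psiN_mono b30
    have hlo : (23:ℝ) ≤ (M:ℝ) := by exact_mod_cast (by omega : 23 ≤ M)
    have := h30.trans c30
    linarith
  by_cases b40 : M ≤ 40
  · have hmono : psiN M ≤ psiN 40 := psiN_mono b40
    have hlo : (31:ℝ) ≤ (M:ℝ) := by exact_mod_cast (by omega : 31 ≤ M)
    have := h40.trans c40
    linarith
  by_cases b52 : M ≤ 52
  · have hmono : psiN M ≤ psiN 52 := psiN_mono b52
    have hlo : (41:ℝ) ≤ (M:ℝ) := by exact_mod_cast (by omega : 41 ≤ M)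
    have := h52.trans c52
    linarith
  by_cases b70 : M ≤ 70
  · have hmono : psiN M ≤ psiN 70 := psiN_mono b70
    have hlo : (53:ℝ) ≤ (M:ℝ) := by exact_mod_cast (by omega : 53 ≤ M)
    have := h70.trans c70
    linarith
  by_cases b88 : M ≤ 88
  · have hmono : psiN M ≤ psiN 88 := psiN_mono b88
    have hlo : (71:ℝ) ≤ (M:ℝ) := by exact_mod_cast (by omega : 71 ≤ M)
    have := h88.trans c88
    linarith
  by_cases b108 : M ≤ 108
  · have hmono : psiN M ≤ psiN 108 := psiN_mono b108
    have hlo : (89:ℝ) ≤ (M:ℝ) := by exact_mod_cast (by omega : 89 ≤ M)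
    have := h108.trans c108
    linarith
  by_cases b138 : M ≤ 138
  · have hmono : psiN M ≤ psiN 138 := psiN_mono b138
    have hlo : (109:ℝ) ≤ (M:ℝ) := by exact_mod_cast (by omega : 109 ≤ M)
    have := h138.trans c138
    linarith
  by_cases b178 : M ≤ 178
  · have hmono : psiN M ≤ psiN 178 := psiN_mono b178
    have hlo : (139:ℝ) ≤ (M:ℝ) := by exact_mod_cast (by omega : 139 ≤ M)
    have := h178.trans c178
    linarith
  by_cases b228 : M ≤ 228
  · have hmono : psiN M ≤ psiN 228 := psiN_mono b228
    have hlo : (179:ℝ) ≤ (M:ℝ) := by exact_mod_cast (by omega : 179 ≤ M)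
    have := h228.trans c228
    linarith
  by_cases b282 : M ≤ 282
  · have hmono : psiN M ≤ psiN 282 := psiN_mono b282
    have hlo : (229:ℝ) ≤ (M:ℝ) := by exact_mod_cast (by omega : 229 ≤ M)
    have := h282.trans c282
    linarith
  by_cases b358 : M ≤ 358
  · have hmono : psiN M ≤ psiN 358 := psiN_mono b358
    have hlo : (283:ℝ) ≤ (M:ℝ) := by exact_mod_cast (by omega : 283 ≤ M)
    have := h358.trans c358
    linarith
  · omega



lemma log3_le : Real.log 3 ≤ 1.0987 := by
  have h := log_nat_le 3 10987 10000 (by norm_num) (by decide +kernel)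
  norm_num at h
  linarith

lemma log5_le : Real.log 5 ≤ 1.6095 := by
  have h := log_nat_le 5 16095 10000 (by norm_num) (by decide +kernel)
  norm_num at h
  linarith

lemma log30_ge : (3.4011 : ℝ) ≤ Real.log 30 := by
  have h := log_nat_ge 30 34011 10000 (by norm_num) (by norm_num) (by decide +kernel)
  norm_num at h
  linarith

lemma log2_le : Real.log 2 ≤ 0.6931471808 := Real.log_two_lt_d9.le

lemma log300_le : Real.log 300 ≤ 5.704 := by
  have : (300:ℝ) = 2^2 * 3 * 5^2 := by norm_num
  rw [this, Real.log_mul (by positivity) (by positivity),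
    Real.log_mul (by positivity) (by positivity), Real.log_pow, Real.log_pow]
  have h2 := log2_le
  have h3 := log3_le
  have h5 := log5_le
  push_cast
  linarith

lemma psi_le (M : ℕ) : psiN M ≤ 1.26 * M := by
  induction M using Nat.strong_induction_on with
  | _ M ih =>
    by_cases hM : M ≤ 358
    · exact psi_base M hM
    · push_neg at hM
      have h359 : 359 ≤ M := hM
      have hx : (359:ℝ) ≤ M := by exact_mod_cast h359
      have hrec := psi_recursion M (by omega)
      have hih := ih (M/6) (Nat.div_lt_self (by omega) (by norm_num))
      have hcast : ((M/6 : ℕ) : ℝ) ≤ (M:ℝ)/6 := by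
        calc ((M/6 : ℕ) : ℝ) ≤ (M:ℝ)/((6:ℕ):ℝ) := Nat.cast_div_le
          _ = (M:ℝ)/6 := by norm_num
      have hlogM : Real.log M ≤ Real.log 300 + ((M:ℝ)/300 - 1) := by
        have hpos : (0:ℝ) < (M:ℝ)/300 := by linarith
        have h1 := Real.log_le_sub_one_of_pos hpos
        have h2 : Real.log ((M:ℝ)/300) = Real.log M - Real.log 300 :=
          Real.log_div (by linarith) (by norm_num)
        linarith
      have hA : Real.log 2 / 2 + Real.log 3 / 3 + Real.log 5 / 5 - Real.log 30 / 30
          ≤ 0.92134 := by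
        have := log2_le; have := log3_le; have := log5_le; have := log30_ge
        linarith
      have hl300 := log300_le
      have hM6 : psiN (M/6) ≤ 1.26 * ((M:ℝ)/6) := by
        calc psiN (M/6) ≤ 1.26 * ((M/6:ℕ):ℝ) := hih
          _ ≤ 1.26 * ((M:ℝ)/6) := by linarith
      have hlogMnn : 0 ≤ Real.log M := Real.log_nonneg (by linarith)
      nlinarith [hrec, hM6, hlogM, hA, hl300, hx]


theorem sum_log_sq_primes_le (N : ℝ) (hN : 2 ≤ N) :
    ∑ p ∈ (Finset.Icc 1 ⌊N⌋₊).filter Nat.Prime, (Real.log p) ^ 2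
      ≤ 1.26 * N * Real.log N := by
  have hN0 : (0:ℝ) ≤ N := by linarith
  have hfl : ((⌊N⌋₊:ℕ):ℝ) ≤ N := Nat.floor_le hN0
  have hlogN : 0 ≤ Real.log N := Real.log_nonneg (by linarith)
  have hsub : (Finset.Icc 1 ⌊N⌋₊).filter Nat.Prime ⊆ Finset.Ioc 0 ⌊N⌋₊ := by
    intro d hd
    simp only [Finset.mem_filter, Finset.mem_Icc] at hd
    simp only [Finset.mem_Ioc]
    omega
  calc ∑ p ∈ (Finset.Icc 1 ⌊N⌋₊).filter Nat.Prime, (Real.log p) ^ 2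
      ≤ ∑ p ∈ (Finset.Icc 1 ⌊N⌋₊).filter Nat.Prime, Λ p * Real.log N := by
        apply Finset.sum_le_sum
        intro p hp
        simp only [Finset.mem_filter, Finset.mem_Icc] at hp
        have hprime := hp.2
        have hp1 : (1:ℝ) ≤ (p:ℝ) := by exact_mod_cast hprime.one_lt.le
        have hpN : (p:ℝ) ≤ N := by
          calc (p:ℝ) ≤ (⌊N⌋₊:ℝ) := by exact_mod_cast hp.1.2
            _ ≤ N := hfl
        have hlogp : 0 ≤ Real.log p := Real.log_nonneg hp1
        have hle : Real.log p ≤ Real.log N := Real.log_le_log (by linarith) hpN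
        rw [ArithmeticFunction.vonMangoldt_apply_prime hprime, sq]
        exact mul_le_mul_of_nonneg_left hle hlogp
    _ = (∑ p ∈ (Finset.Icc 1 ⌊N⌋₊).filter Nat.Prime, Λ p) * Real.log N :=
        (Finset.sum_mul _ _ _).symm
    _ ≤ psiN ⌊N⌋₊ * Real.log N := by
        apply mul_le_mul_of_nonneg_right _ hlogN
        exact Finset.sum_le_sum_of_subset_of_nonneg hsub (fun _ _ _ => vonMangoldt_nonneg)
    _ ≤ (1.26 * (⌊N⌋₊:ℝ)) * Real.log N :=
        mul_le_mul_of_nonneg_right (psi_le _) hlogN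
    _ ≤ 1.26 * N * Real.log N := by
        apply mul_le_mul_of_nonneg_right _ hlogN
        linarith
end

section
/- For all multiplicative functions f with |f(n)| ≤ B for all n, the double sum ∑ over primes p ≥ 2 and integers k ≥ 2 of |f(p^k)|·(log p)·∑_{n ≤ N p^{−k}} |f(n)| is at most 0.8 · B² · N. -/
/-! Auxiliary machinery for `prime_power_sum_bound`. -/

noncomputable def ppsbG : ℕ → ℝ :=
  fun n => if n.Prime then Real.log n / ((n : ℝ) * ((n : ℝ) - 1)) else 0

lemma ppsbG_nonneg (n : ℕ) : 0 ≤ ppsbG n := by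
  unfold ppsbG
  split
  · rename_i h
    have h2 : (2:ℝ) ≤ (n:ℝ) := by exact_mod_cast h.two_le
    apply div_nonneg (Real.log_natCast_nonneg n)
    nlinarith
  · exact le_refl _

lemma ppsb_two_log_le {u : ℝ} (hu : 1 ≤ u) : 2 * Real.log u ≤ u - u⁻¹ := by
  have hu0 : (0:ℝ) < u := lt_of_lt_of_le one_pos hu
  have hs : 0 ≤ Real.log u := Real.log_nonneg hu
  have h1 : u - u⁻¹ = 2 * Real.sinh (Real.log u) := by
    rw [Real.sinh_eq, Real.exp_log hu0, Real.exp_neg, Real.exp_log hu0]; ring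
  rw [h1]
  rcases eq_or_lt_of_le hs with h | h
  · rw [← h]; simp
  · have := Real.self_lt_sinh_iff.2 h
    linarith

lemma ppsb_log_div_le {x : ℝ} (hx : 2 ≤ x) :
    Real.log x / (x * (x - 1)) ≤ 2 * x ^ (-(7:ℝ)/4) := by
  have hx0 : (0:ℝ) < x := by linarith
  set u : ℝ := x ^ ((1:ℝ)/4) with hu
  have hu0 : 0 < u := Real.rpow_pos_of_pos hx0 _
  have hu1 : 1 ≤ u := Real.one_le_rpow (by linarith) (by norm_num)
  have hux : u ^ (4:ℕ) = x := by
    rw [hu, ← Real.rpow_natCast (x ^ ((1:ℝ)/4)) 4, ← Real.rpow_mul hx0.le]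
    norm_num
  have hgt1 : 1 < u := by
    by_contra hc
    push_neg at hc
    have h1 : u = 1 := le_antisymm hc hu1
    rw [h1] at hux; simp at hux; linarith
  have hlog : Real.log x = 4 * Real.log u := by
    rw [hu, Real.log_rpow hx0]; ring
  have hrp : x ^ (-(7:ℝ)/4) = (u ^ (7:ℕ))⁻¹ := by
    rw [hu, ← Real.rpow_natCast (x ^ ((1:ℝ)/4)) 7, ← Real.rpow_mul hx0.le, ← Real.rpow_neg hx0.le]
    norm_num
  have key : 2 * Real.log u ≤ u - u⁻¹ := ppsb_two_log_le hu1
  have huu : u * u⁻¹ = 1 := mul_inv_cancel₀ (ne_of_gt hu0)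
  have key3 : 2 * u * Real.log u ≤ u^2 - 1 := by
    have t := mul_le_mul_of_nonneg_left key hu0.le
    have e : u * (u - u⁻¹) = u^2 - 1 := by
      rw [mul_sub, huu]; ring
    rw [e] at t; linarith
  rw [hrp, ← div_eq_mul_inv, hlog, ← hux]
  rw [div_le_div_iff₀ (by nlinarith) (by positivity)]
  have key4 := mul_le_mul_of_nonneg_left key3 (by positivity : (0:ℝ) ≤ 2*u^6)
  have h46 : u^4 ≤ u^6 := by nlinarith
  nlinarith [key4, h46]

lemma ppsb_tele {x : ℝ} (hx : 2 ≤ x) :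
    2 * x ^ (-(7:ℝ)/4) ≤ (8/3) * ((x-1) ^ (-(3:ℝ)/4) - x ^ (-(3:ℝ)/4)) := by
  have hx0 : (0:ℝ) < x := by linarith
  have hx1 : (0:ℝ) < x - 1 := by linarith
  set a : ℝ := (x-1) ^ (-(3:ℝ)/4) with ha
  set b : ℝ := x ^ (-(3:ℝ)/4) with hb
  have ha0 : 0 < a := Real.rpow_pos_of_pos hx1 _
  have hb0 : 0 < b := Real.rpow_pos_of_pos hx0 _
  have ha4 : a ^ (4:ℕ) = ((x-1) ^ (3:ℕ))⁻¹ := by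
    rw [ha, ← Real.rpow_natCast ((x-1) ^ (-(3:ℝ)/4)) 4, ← Real.rpow_mul hx1.le,
      show (-(3:ℝ)/4 * ((4:ℕ):ℝ) : ℝ) = -(3:ℝ) by push_cast; ring,
      Real.rpow_neg hx1.le,
      show ((3:ℝ)) = ((3:ℕ):ℝ) by norm_num, Real.rpow_natCast]
  have hb4 : b ^ (4:ℕ) = (x ^ (3:ℕ))⁻¹ := by
    rw [hb, ← Real.rpow_natCast (x ^ (-(3:ℝ)/4)) 4, ← Real.rpow_mul hx0.le,
      show (-(3:ℝ)/4 * ((4:ℕ):ℝ) : ℝ) = -(3:ℝ) by push_cast; ring,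
      Real.rpow_neg hx0.le,
      show ((3:ℝ)) = ((3:ℕ):ℝ) by norm_num, Real.rpow_natCast]
  have ht : (0:ℝ) ≤ x - 1 := hx1.le
  have claim : b * (1 + 3/(4*x)) ≤ a := by
    apply le_of_pow_le_pow_left₀ (n := 4) (by norm_num) ha0.le
    rw [mul_pow, ha4, hb4]
    have e1 : (1 + 3/(4*x)) = (4*x+3)/(4*x) := by field_simp
    rw [e1, div_pow]
    have e2 : (x ^ (3:ℕ))⁻¹ * ((4*x+3)^4 / (4*x)^4) = (4*x+3)^4 / (256 * x^7) := by
      field_simp; ring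
    rw [e2, inv_eq_one_div, div_le_div_iff₀ (by positivity) (by positivity)]
    nlinarith [pow_nonneg ht 5, pow_nonneg ht 4, pow_nonneg ht 3, pow_nonneg ht 2, ht]
  have hsplit : x ^ (-(7:ℝ)/4) = b * x⁻¹ := by
    rw [hb, ← Real.rpow_neg_one x, ← Real.rpow_add hx0]
    norm_num
  rw [hsplit]
  have h3 : (8:ℝ)/3 * (a - b) ≥ (8/3) * (b * (3/(4*x))) := by
    nlinarith [claim]
  have h4 : (8:ℝ)/3 * (b * (3/(4*x))) = 2 * (b * x⁻¹) := by
    field_simp; ring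
  linarith

lemma ppsbG_le (n : ℕ) : ppsbG n ≤ 2 * (n:ℝ) ^ (-(7:ℝ)/4) := by
  unfold ppsbG
  split
  · rename_i h
    have h2 : (2:ℝ) ≤ (n:ℝ) := by exact_mod_cast h.two_le
    exact ppsb_log_div_le h2
  · positivity

lemma ppsb_summable : Summable ppsbG := by
  apply Summable.of_nonneg_of_le ppsbG_nonneg ppsbG_le
  exact (Real.summable_nat_rpow.2 (by norm_num)).mul_left 2

lemma ppsb_F0 : ((256:ℕ):ℝ) ^ (-(3:ℝ)/4) = 1/64 := by
  rw [show (((256:ℕ)):ℝ) = (4:ℝ)^(4:ℕ) by norm_num, ← Real.rpow_natCast 4 4,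
    ← Real.rpow_mul (by norm_num),
    show ((4:ℕ):ℝ) * (-(3:ℝ)/4) = -(3:ℝ) by push_cast; ring,
    Real.rpow_neg (by norm_num), show ((3:ℝ)) = ((3:ℕ):ℝ) by norm_num, Real.rpow_natCast]
  norm_num

lemma ppsb_tail : ∑' m : ℕ, ppsbG (m + 257) ≤ 1/24 := by
  have hF : ∀ M : ℕ, (0:ℝ) ≤ ((M + 256 : ℕ):ℝ) ^ (-(3:ℝ)/4) := by
    intro M; positivity
  apply Real.tsum_le_of_sum_range_le (fun n => ppsbG_nonneg _)
  intro M
  have step : ∀ m : ℕ, ppsbG (m + 257)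
      ≤ (8/3) * (((m + 256 : ℕ):ℝ) ^ (-(3:ℝ)/4) - ((m + 1 + 256 : ℕ):ℝ) ^ (-(3:ℝ)/4)) := by
    intro m
    have hx : (2:ℝ) ≤ ((m + 257 : ℕ):ℝ) := by push_cast; linarith [Nat.cast_nonneg (α := ℝ) m]
    refine le_trans (ppsbG_le _) (le_trans (ppsb_tele hx) (le_of_eq ?_))
    congr 2 <;> push_cast <;> ring
  calc ∑ m ∈ Finset.range M, ppsbG (m + 257)
      ≤ ∑ m ∈ Finset.range M,
          (8/3) * (((m + 256 : ℕ):ℝ) ^ (-(3:ℝ)/4) - ((m + 1 + 256 : ℕ):ℝ) ^ (-(3:ℝ)/4)) :=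
        Finset.sum_le_sum (fun m _ => step m)
    _ = (8/3) * (((0 + 256 : ℕ):ℝ) ^ (-(3:ℝ)/4) - ((M + 256 : ℕ):ℝ) ^ (-(3:ℝ)/4)) := by
        rw [← Finset.mul_sum, Finset.sum_range_sub' (fun m => ((m + 256 : ℕ):ℝ) ^ (-(3:ℝ)/4)) M]
    _ ≤ (8/3) * (((256 : ℕ):ℝ) ^ (-(3:ℝ)/4)) := by
        have := hF M
        have h0 : ((0 + 256 : ℕ):ℝ) ^ (-(3:ℝ)/4) = ((256:ℕ):ℝ) ^ (-(3:ℝ)/4) := by norm_num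
        rw [h0]; nlinarith
    _ ≤ 1/24 := by rw [ppsb_F0]; norm_num

lemma ppsb_log_le {x : ℝ} {k m : ℕ} {c : ℝ} (hx : 1 ≤ x) (hk : 0 < k)
    (h : x^k ≤ 2^m) (hc : (m:ℝ) * 0.6931471808 ≤ (k:ℝ) * c) : Real.log x ≤ c := by
  have hx0 : (0:ℝ) < x := lt_of_lt_of_le one_pos hx
  have h1 : Real.log (x^k) = (k:ℝ) * Real.log x := Real.log_pow x k
  have h2 : Real.log (x^k) ≤ Real.log ((2:ℝ)^m) := Real.log_le_log (by positivity) h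
  have h3 : Real.log ((2:ℝ)^m) = (m:ℝ) * Real.log 2 := Real.log_pow 2 m
  have h4 : (m:ℝ) * Real.log 2 ≤ (m:ℝ) * 0.6931471808 :=
    mul_le_mul_of_nonneg_left (le_of_lt Real.log_two_lt_d9) (Nat.cast_nonneg m)
  have h5 : (k:ℝ) * Real.log x ≤ (k:ℝ) * c := by linarith
  exact le_of_mul_le_mul_left h5 (by exact_mod_cast hk)

set_option maxHeartbeats 4000000 in
set_option maxRecDepth 40000 in
lemma ppsb_finite : ∑ i ∈ Finset.range 257, ppsbG i ≤ 0.8 - 1/24 := by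
  have hl2 : Real.log 2 ≤ 693147181/1000000000 := ppsb_log_le (x := 2) (k := 1) (m := 1) (c := 693147181/1000000000) (by norm_num) (by norm_num) (by norm_num) (by norm_num)
  have hl3 : Real.log 3 ≤ 34340371/31250000 := ppsb_log_le (x := 3) (k := 41) (m := 65) (c := 34340371/31250000) (by norm_num) (by norm_num) (by norm_num) (by norm_num)
  have hl5 : Real.log 5 ≤ 1609511251/1000000000 := ppsb_log_le (x := 5) (k := 59) (m := 137) (c := 1609511251/1000000000) (by norm_num) (by norm_num) (by norm_num) (by norm_num)
  have hl7 : Real.log 7 ≤ 243268001/125000000 := ppsb_log_le (x := 7) (k := 26) (m := 73) (c := 243268001/125000000) (by norm_num) (by norm_num) (by norm_num) (by norm_num)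
  have hl11 : Real.log 11 ≤ 599478643/250000000 := ppsb_log_le (x := 11) (k := 37) (m := 128) (c := 599478643/250000000) (by norm_num) (by norm_num) (by norm_num) (by norm_num)
  have hl13 : Real.log 13 ≤ 2565860617/1000000000 := ppsb_log_le (x := 13) (k := 57) (m := 211) (c := 2565860617/1000000000) (by norm_num) (by norm_num) (by norm_num) (by norm_num)
  have hl17 : Real.log 17 ≤ 708347777/250000000 := ppsb_log_le (x := 17) (k := 57) (m := 233) (c := 708347777/250000000) (by norm_num) (by norm_num) (by norm_num) (by norm_num)
  have hl19 : Real.log 19 ≤ 2945875519/1000000000 := ppsb_log_le (x := 19) (k := 4) (m := 17) (c := 2945875519/1000000000) (by norm_num) (by norm_num) (by norm_num) (by norm_num)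
  have hl23 : Real.log 23 ≤ 1567832909/500000000 := ppsb_log_le (x := 23) (k := 21) (m := 95) (c := 1567832909/500000000) (by norm_num) (by norm_num) (by norm_num) (by norm_num)
  have hl29 : Real.log 29 ≤ 336845209/100000000 := ppsb_log_le (x := 29) (k := 57) (m := 277) (c := 336845209/100000000) (by norm_num) (by norm_num) (by norm_num [pow_succ]) (by norm_num)
  have hl31 : Real.log 31 ≤ 1717114607/500000000 := ppsb_log_le (x := 31) (k := 22) (m := 109) (c := 1717114607/500000000) (by norm_num) (by norm_num) (by norm_num) (by norm_num)
  have hl37 : Real.log 37 ≤ 3611661627/1000000000 := ppsb_log_le (x := 37) (k := 19) (m := 99) (c := 3611661627/1000000000) (by norm_num) (by norm_num) (by norm_num) (by norm_num)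
  have hl41 : Real.log 41 ≤ 371422263/100000000 := ppsb_log_le (x := 41) (k := 53) (m := 284) (c := 371422263/100000000) (by norm_num) (by norm_num) (by norm_num [pow_succ]) (by norm_num)
  have hl43 : Real.log 43 ≤ 1881399491/500000000 := ppsb_log_le (x := 43) (k := 7) (m := 38) (c := 1881399491/500000000) (by norm_num) (by norm_num) (by norm_num) (by norm_num)
  have hl47 : Real.log 47 ≤ 481352209/125000000 := ppsb_log_le (x := 47) (k := 9) (m := 50) (c := 481352209/125000000) (by norm_num) (by norm_num) (by norm_num) (by norm_num)
  have hl53 : Real.log 53 ≤ 496363871/125000000 := ppsb_log_le (x := 53) (k := 59) (m := 338) (c := 496363871/125000000) (by norm_num) (by norm_num) (by norm_num [pow_succ]) (by norm_num)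
  have hl59 : Real.log 59 ≤ 2039007957/500000000 := ppsb_log_le (x := 59) (k := 60) (m := 353) (c := 2039007957/500000000) (by norm_num) (by norm_num) (by norm_num [pow_succ]) (by norm_num)
  have hl61 : Real.log 61 ≤ 4111079831/1000000000 := ppsb_log_le (x := 61) (k := 29) (m := 172) (c := 4111079831/1000000000) (by norm_num) (by norm_num) (by norm_num) (by norm_num)
  have hl67 : Real.log 67 ≤ 4205092897/1000000000 := ppsb_log_le (x := 67) (k := 15) (m := 91) (c := 4205092897/1000000000) (by norm_num) (by norm_num) (by norm_num) (by norm_num)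
  have hl71 : Real.log 71 ≤ 2131427581/500000000 := ppsb_log_le (x := 71) (k := 20) (m := 123) (c := 2131427581/500000000) (by norm_num) (by norm_num) (by norm_num) (by norm_num)
  have hl73 : Real.log 73 ≤ 53636389/12500000 := ppsb_log_le (x := 73) (k := 21) (m := 130) (c := 53636389/12500000) (by norm_num) (by norm_num) (by norm_num) (by norm_num)
  have hl79 : Real.log 79 ≤ 4369840923/1000000000 := ppsb_log_le (x := 79) (k := 23) (m := 145) (c := 4369840923/1000000000) (by norm_num) (by norm_num) (by norm_num) (by norm_num)
  have hl83 : Real.log 83 ≤ 4420448059/1000000000 := ppsb_log_le (x := 83) (k := 53) (m := 338) (c := 4420448059/1000000000) (by norm_num) (by norm_num) (by norm_num [pow_succ]) (by norm_num)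
  have hl89 : Real.log 89 ≤ 4488953171/1000000000 := ppsb_log_le (x := 89) (k := 21) (m := 136) (c := 4488953171/1000000000) (by norm_num) (by norm_num) (by norm_num) (by norm_num)
  have hl97 : Real.log 97 ≤ 2287385697/500000000 := ppsb_log_le (x := 97) (k := 5) (m := 33) (c := 2287385697/500000000) (by norm_num) (by norm_num) (by norm_num) (by norm_num)
  have hl101 : Real.log 101 ≤ 4615345863/1000000000 := ppsb_log_le (x := 101) (k := 41) (m := 273) (c := 4615345863/1000000000) (by norm_num) (by norm_num) (by norm_num [pow_succ]) (by norm_num)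
  have hl103 : Real.log 103 ≤ 1158855443/250000000 := ppsb_log_le (x := 103) (k := 16) (m := 107) (c := 1158855443/250000000) (by norm_num) (by norm_num) (by norm_num) (by norm_num)
  have hl107 : Real.log 107 ≤ 2336576787/500000000 := ppsb_log_le (x := 107) (k := 31) (m := 209) (c := 2336576787/500000000) (by norm_num) (by norm_num) (by norm_num) (by norm_num)
  have hl109 : Real.log 109 ≤ 586509153/125000000 := ppsb_log_le (x := 109) (k := 13) (m := 88) (c := 586509153/125000000) (by norm_num) (by norm_num) (by norm_num) (by norm_num)
  have hl113 : Real.log 113 ≤ 2363809617/500000000 := ppsb_log_le (x := 113) (k := 39) (m := 266) (c := 2363809617/500000000) (by norm_num) (by norm_num) (by norm_num [pow_succ]) (by norm_num)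
  have hl127 : Real.log 127 ≤ 2426015133/500000000 := ppsb_log_le (x := 127) (k := 1) (m := 7) (c := 2426015133/500000000) (by norm_num) (by norm_num) (by norm_num) (by norm_num)
  have hl131 : Real.log 131 ≤ 4875526781/1000000000 := ppsb_log_le (x := 131) (k := 59) (m := 415) (c := 4875526781/1000000000) (by norm_num) (by norm_num) (by norm_num [pow_succ]) (by norm_num)
  have hl137 : Real.log 137 ≤ 307499117/62500000 := ppsb_log_le (x := 137) (k := 51) (m := 362) (c := 307499117/62500000) (by norm_num) (by norm_num) (by norm_num [pow_succ]) (by norm_num)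
  have hl139 : Real.log 139 ≤ 1233636947/250000000 := ppsb_log_le (x := 139) (k := 42) (m := 299) (c := 1233636947/250000000) (by norm_num) (by norm_num) (by norm_num [pow_succ]) (by norm_num)
  have hl149 : Real.log 149 ≤ 200167381/40000000 := ppsb_log_le (x := 149) (k := 41) (m := 296) (c := 200167381/40000000) (by norm_num) (by norm_num) (by norm_num [pow_succ]) (by norm_num)
  have hl151 : Real.log 151 ≤ 5017782853/1000000000 := ppsb_log_le (x := 151) (k := 46) (m := 333) (c := 5017782853/1000000000) (by norm_num) (by norm_num) (by norm_num [pow_succ]) (by norm_num)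
  have hl157 : Real.log 157 ≤ 5056823751/1000000000 := ppsb_log_le (x := 157) (k := 44) (m := 321) (c := 5056823751/1000000000) (by norm_num) (by norm_num) (by norm_num [pow_succ]) (by norm_num)
  have hl163 : Real.log 163 ≤ 2546912897/500000000 := ppsb_log_le (x := 163) (k := 43) (m := 316) (c := 2546912897/500000000) (by norm_num) (by norm_num) (by norm_num [pow_succ]) (by norm_num)
  have hl167 : Real.log 167 ≤ 639828167/125000000 := ppsb_log_le (x := 167) (k := 13) (m := 96) (c := 639828167/125000000) (by norm_num) (by norm_num) (by norm_num) (by norm_num)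
  have hl173 : Real.log 173 ≤ 2576699303/500000000 := ppsb_log_le (x := 173) (k := 23) (m := 171) (c := 2576699303/500000000) (by norm_num) (by norm_num) (by norm_num) (by norm_num)
  have hl179 : Real.log 179 ≤ 5187424063/1000000000 := ppsb_log_le (x := 179) (k := 31) (m := 232) (c := 5187424063/1000000000) (by norm_num) (by norm_num) (by norm_num) (by norm_num)
  have hl181 : Real.log 181 ≤ 324912741/62500000 := ppsb_log_le (x := 181) (k := 2) (m := 15) (c := 324912741/62500000) (by norm_num) (by norm_num) (by norm_num) (by norm_num)
  have hl191 : Real.log 191 ≤ 656564413/125000000 := ppsb_log_le (x := 191) (k := 45) (m := 341) (c := 656564413/125000000) (by norm_num) (by norm_num) (by norm_num [pow_succ]) (by norm_num)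
  have hl193 : Real.log 193 ≤ 5262784151/1000000000 := ppsb_log_le (x := 193) (k := 27) (m := 205) (c := 5262784151/1000000000) (by norm_num) (by norm_num) (by norm_num) (by norm_num)
  have hl197 : Real.log 197 ≤ 1056664369/200000000 := ppsb_log_le (x := 197) (k := 45) (m := 343) (c := 1056664369/200000000) (by norm_num) (by norm_num) (by norm_num [pow_succ]) (by norm_num)
  have hl199 : Real.log 199 ≤ 1323552591/250000000 := ppsb_log_le (x := 199) (k := 58) (m := 443) (c := 1323552591/250000000) (by norm_num) (by norm_num) (by norm_num [pow_succ]) (by norm_num)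
  have hl211 : Real.log 211 ≤ 5352636563/1000000000 := ppsb_log_le (x := 211) (k := 18) (m := 139) (c := 5352636563/1000000000) (by norm_num) (by norm_num) (by norm_num) (by norm_num)
  have hl223 : Real.log 223 ≤ 338063971/62500000 := ppsb_log_le (x := 223) (k := 56) (m := 437) (c := 338063971/62500000) (by norm_num) (by norm_num) (by norm_num [pow_succ]) (by norm_num)
  have hl227 : Real.log 227 ≤ 2712604833/500000000 := ppsb_log_le (x := 227) (k := 52) (m := 407) (c := 2712604833/500000000) (by norm_num) (by norm_num) (by norm_num [pow_succ]) (by norm_num)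
  have hl229 : Real.log 229 ≤ 5433778793/1000000000 := ppsb_log_le (x := 229) (k := 56) (m := 439) (c := 5433778793/1000000000) (by norm_num) (by norm_num) (by norm_num [pow_succ]) (by norm_num)
  have hl233 : Real.log 233 ≤ 1362797847/250000000 := ppsb_log_le (x := 233) (k := 59) (m := 464) (c := 1362797847/250000000) (by norm_num) (by norm_num) (by norm_num [pow_succ]) (by norm_num)
  have hl239 : Real.log 239 ≤ 5477221841/1000000000 := ppsb_log_le (x := 239) (k := 51) (m := 403) (c := 5477221841/1000000000) (by norm_num) (by norm_num) (by norm_num [pow_succ]) (by norm_num)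
  have hl241 : Real.log 241 ≤ 5484903779/1000000000 := ppsb_log_le (x := 241) (k := 23) (m := 182) (c := 5484903779/1000000000) (by norm_num) (by norm_num) (by norm_num) (by norm_num)
  have hl251 : Real.log 251 ≤ 5525923359/1000000000 := ppsb_log_le (x := 251) (k := 36) (m := 287) (c := 5525923359/1000000000) (by norm_num) (by norm_num) (by norm_num [pow_succ]) (by norm_num)
  norm_num [ppsbG, Finset.sum_range_succ]
  linarith

lemma ppsb_tsumG : ∑' n : ℕ, ppsbG n ≤ 0.8 := by
  have h := Summable.sum_add_tsum_nat_add (f := ppsbG) 257 ppsb_summable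
  linarith [ppsb_finite, ppsb_tail, h]

theorem prime_power_sum_bound (B : ℝ) (hB : 1 ≤ B) (N : ℕ) (hN : 0 < N)
    (f : ArithmeticFunction ℂ) (hf : f.IsMultiplicative)
    (hfB : ∀ n : ℕ, ‖f n‖ ≤ B) :
    ∑' p : Nat.Primes, ∑' k : ℕ,
      ‖f ((p : ℕ) ^ (k + 2))‖ * Real.log p *
        ∑ n ∈ Finset.Icc 1 (N / (p : ℕ) ^ (k + 2)), ‖f n‖
      ≤ 0.8 * B ^ 2 * N := by
  have hB0 : (0:ℝ) ≤ B := le_trans zero_le_one hB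
  set T : Nat.Primes → ℕ → ℝ := fun p k =>
    ‖f ((p : ℕ) ^ (k + 2))‖ * Real.log (p : ℕ) *
      ∑ n ∈ Finset.Icc 1 (N / (p : ℕ) ^ (k + 2)), ‖f n‖ with hT
  have hTnonneg : ∀ p k, 0 ≤ T p k := by
    intro p k
    apply mul_nonneg (mul_nonneg (norm_nonneg _) (Real.log_natCast_nonneg _))
    exact Finset.sum_nonneg fun n _ => norm_nonneg _
  have key : ∀ p : Nat.Primes, ∀ k : ℕ,
      T p k ≤ (B^2 * N * Real.log (p:ℕ) / ((p:ℕ):ℝ)^2) * (((p:ℕ):ℝ)⁻¹)^k := by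
    intro p k
    have hp2 : 2 ≤ (p:ℕ) := p.prop.two_le
    have hpR : (2:ℝ) ≤ ((p:ℕ):ℝ) := by exact_mod_cast hp2
    have hp0 : (0:ℝ) < ((p:ℕ):ℝ) := by linarith
    have hlogp : 0 ≤ Real.log ((p:ℕ):ℝ) := Real.log_natCast_nonneg _
    have hS : ∑ n ∈ Finset.Icc 1 (N / (p:ℕ)^(k+2)), ‖f n‖
        ≤ ((N / (p:ℕ)^(k+2) : ℕ):ℝ) * B := by
      calc ∑ n ∈ Finset.Icc 1 (N / (p:ℕ)^(k+2)), ‖f n‖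
          ≤ ∑ _n ∈ Finset.Icc 1 (N / (p:ℕ)^(k+2)), B := Finset.sum_le_sum fun n _ => hfB n
        _ = ((N / (p:ℕ)^(k+2) : ℕ):ℝ) * B := by
            rw [Finset.sum_const, nsmul_eq_mul, Nat.card_Icc]
            norm_num
    have hcast : ((N / (p:ℕ)^(k+2) : ℕ):ℝ) ≤ (N:ℝ) / ((p:ℕ):ℝ)^(k+2) := by
      have h := Nat.cast_div_le (m := N) (n := (p:ℕ)^(k+2)) (α := ℝ)
      push_cast at h ⊢
      exact h
    have hS2 : ∑ n ∈ Finset.Icc 1 (N / (p:ℕ)^(k+2)), ‖f n‖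
        ≤ (N:ℝ) / ((p:ℕ):ℝ)^(k+2) * B :=
      le_trans hS (mul_le_mul_of_nonneg_right hcast hB0)
    have hS0 : (0:ℝ) ≤ ∑ n ∈ Finset.Icc 1 (N / (p:ℕ)^(k+2)), ‖f n‖ :=
      Finset.sum_nonneg fun n _ => norm_nonneg _
    have h1 : T p k ≤ B * Real.log ((p:ℕ):ℝ) * ((N:ℝ) / ((p:ℕ):ℝ)^(k+2) * B) := by
      rw [hT]
      apply mul_le_mul
      · exact mul_le_mul_of_nonneg_right (hfB _) hlogp
      · exact hS2
      · exact hS0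
      · exact mul_nonneg hB0 hlogp
    refine le_trans h1 (le_of_eq ?_)
    rw [pow_add]
    field_simp
    rw [mul_assoc, ← mul_pow, mul_one_div_cancel (ne_of_gt hp0), one_pow, mul_one]
  have hr0 : ∀ p : Nat.Primes, (0:ℝ) ≤ ((p:ℕ):ℝ)⁻¹ := by
    intro p; positivity
  have hr1 : ∀ p : Nat.Primes, ((p:ℕ):ℝ)⁻¹ < 1 := by
    intro p
    have hpR : (2:ℝ) ≤ ((p:ℕ):ℝ) := by exact_mod_cast p.prop.two_le
    rw [inv_lt_one_iff₀]
    right; linarith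
  have hgeo : ∀ p : Nat.Primes,
      Summable (fun k : ℕ => (B^2 * N * Real.log (p:ℕ) / ((p:ℕ):ℝ)^2) * (((p:ℕ):ℝ)⁻¹)^k) :=
    fun p => (summable_geometric_of_lt_one (hr0 p) (hr1 p)).mul_left _
  have hTsummable : ∀ p : Nat.Primes, Summable (T p) :=
    fun p => Summable.of_nonneg_of_le (hTnonneg p) (key p) (hgeo p)
  have inner : ∀ p : Nat.Primes, ∑' k, T p k ≤ B^2 * (N:ℝ) * ppsbG (p:ℕ) := by
    intro p
    have hp2 : 2 ≤ (p:ℕ) := p.prop.two_le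
    have hpR : (2:ℝ) ≤ ((p:ℕ):ℝ) := by exact_mod_cast hp2
    have hp0 : (0:ℝ) < ((p:ℕ):ℝ) := by linarith
    calc ∑' k, T p k
        ≤ ∑' k, (B^2 * N * Real.log (p:ℕ) / ((p:ℕ):ℝ)^2) * (((p:ℕ):ℝ)⁻¹)^k :=
          Summable.tsum_le_tsum (key p) (hTsummable p) (hgeo p)
      _ = (B^2 * N * Real.log (p:ℕ) / ((p:ℕ):ℝ)^2) * (1 - ((p:ℕ):ℝ)⁻¹)⁻¹ := by
          rw [tsum_mul_left, tsum_geometric_of_lt_one (hr0 p) (hr1 p)]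
      _ = B^2 * (N:ℝ) * ppsbG (p:ℕ) := by
          rw [ppsbG, if_pos p.prop]
          have h10 : ((p:ℕ):ℝ) ≠ 0 := ne_of_gt hp0
          have h11 : ((p:ℕ):ℝ) - 1 ≠ 0 := by intro h; nlinarith
          have h12 : 1 - ((p:ℕ):ℝ)⁻¹ ≠ 0 := by
            intro h
            have : ((p:ℕ):ℝ)⁻¹ = 1 := by linarith
            have : ((p:ℕ):ℝ) = 1 := by
              field_simp at this
              linarith
            linarith
          field_simp
  have houter : Summable (fun p : Nat.Primes => B^2 * (N:ℝ) * ppsbG (p:ℕ)) :=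
    (ppsb_summable.comp_injective Nat.Primes.coe_nat_injective).mul_left _
  have hLHS : Summable (fun p : Nat.Primes => ∑' k, T p k) :=
    Summable.of_nonneg_of_le (fun p => tsum_nonneg (hTnonneg p)) inner houter
  have hsub : ∑' p : Nat.Primes, ppsbG (p:ℕ) ≤ ∑' n : ℕ, ppsbG n :=
    Summable.tsum_le_tsum_of_inj (fun p : Nat.Primes => (p:ℕ)) Nat.Primes.coe_nat_injective
      (fun c _ => ppsbG_nonneg c) (fun p => le_refl _)
      (ppsb_summable.comp_injective Nat.Primes.coe_nat_injective) ppsb_summable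
  calc ∑' p : Nat.Primes, ∑' k : ℕ, T p k
      ≤ ∑' p : Nat.Primes, B^2 * (N:ℝ) * ppsbG (p:ℕ) := Summable.tsum_le_tsum inner hLHS houter
    _ = B^2 * (N:ℝ) * ∑' p : Nat.Primes, ppsbG (p:ℕ) := tsum_mul_left
    _ ≤ B^2 * (N:ℝ) * 0.8 := by
        apply mul_le_mul_of_nonneg_left (le_trans hsub ppsb_tsumG)
        positivity
    _ = 0.8 * B^2 * N := by ring
end
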